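/- arXiv:1702.06096 — 5 statements merged into one kernel-verified Lean document; each statement's English description precedes it below -/
import Mathlib

section
/- Let C1 = 1 + 3·∑_{d≥1} (-1)^d·d·(3d-1)!/(d!)^3·q^d ∈ Q[[q]], X = (D C1)/C1 where D = q·d/dq, and let L ∈ Q[[q]] be the unique power series with constant term 1 and L^3·(1+27q) = 1. Then the identity X^2 − (L^3 − 1)·X + D X − (2/9)·(L^3 − 1) = 0 holds in Q[[q]]. -/
/-- The operator `D = q·d/dq` on formal power series. -/
noncomputable def qD (F : PowerSeries ℚ) : PowerSeries ℚ :=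
  PowerSeries.mk fun n => (n : ℚ) * PowerSeries.coeff n F

/-- `C1 = 1 + 3·∑_{d≥1} (-1)^d·d·(3d-1)!/(d!)^3·q^d`. -/
noncomputable def C1series : PowerSeries ℚ :=
  PowerSeries.mk fun d =>
    if d = 0 then 1
    else 3 * (-1) ^ d * d * (Nat.factorial (3 * d - 1) : ℚ) / ((Nat.factorial d : ℚ)) ^ 3

open PowerSeries

lemma coeff_qD (F : PowerSeries ℚ) (n : ℕ) :
    coeff n (qD F) = (n : ℚ) * coeff n F := by
  simp [qD]

lemma qD_eq (F : PowerSeries ℚ) : qD F = X * F.derivativeFun := by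
  ext n
  cases n with
  | zero => simp [← PowerSeries.coeff_zero_eq_constantCoeff, coeff_qD, PowerSeries.coeff_zero_X_mul]
  | succ m =>
    rw [coeff_qD, coeff_succ_X_mul, show F.derivativeFun = derivative ℚ F from rfl, coeff_derivative]
    push_cast; ring

lemma qD_mul (F G : PowerSeries ℚ) : qD (F * G) = qD F * G + F * qD G := by
  simp only [qD_eq, derivativeFun_mul, smul_eq_mul]
  ring

/-- coefficient recurrence for C1 -/
lemma c1_rec (n : ℕ) :
    ((n : ℚ) + 1) ^ 2 * coeff (n + 1) C1series
      + (27 * (n : ℚ) ^ 2 + 27 * n + 6) * coeff n C1series = 0 := by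
  cases n with
  | zero =>
    norm_num [C1series, coeff_mk, Nat.factorial]
  | succ m =>
    have h1 : 3 * (m + 1 + 1) - 1 = 3 * m + 2 + 3 := by omega
    have h2 : 3 * (m + 1) - 1 = 3 * m + 2 := by omega
    simp only [C1series, coeff_mk, Nat.succ_ne_zero, if_false, h1, h2]
    have hb : ((Nat.factorial (m + 1) : ℚ)) ≠ 0 := by
      exact_mod_cast (Nat.factorial_pos (m + 1)).ne'
    have hfact2 : (Nat.factorial (m + 1 + 1) : ℚ) = (m + 2) * Nat.factorial (m + 1) := by
      rw [Nat.factorial_succ]; push_cast; ring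
    have hfact3 : (Nat.factorial (3 * m + 2 + 3) : ℚ)
        = (3 * m + 5) * (3 * m + 4) * (3 * m + 3) * Nat.factorial (3 * m + 2) := by
      have hn : Nat.factorial (3 * m + 2 + 3)
          = (3 * m + 5) * ((3 * m + 4) * ((3 * m + 3) * Nat.factorial (3 * m + 2))) := by
        have e1 : 3 * m + 2 + 3 = (3 * m + 2 + 2) + 1 := by omega
        have e2 : 3 * m + 2 + 2 = (3 * m + 2 + 1) + 1 := by omega
        rw [e1, Nat.factorial_succ, e2, Nat.factorial_succ, Nat.factorial_succ]
      rw [hn]; push_cast; ring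
    rw [hfact2, hfact3]
    have hm2 : ((m : ℚ) + 2) ≠ 0 := by positivity
    field_simp
    rw [pow_succ, pow_succ]
    push_cast
    ring

/-- the hypergeometric ODE satisfied by C1 -/
lemma c1_ode :
    qD (qD C1series)
      + X * (27 * qD (qD C1series) + 27 * qD C1series + 6 * C1series) = 0 := by
  ext n
  cases n with
  | zero => simp [← PowerSeries.coeff_zero_eq_constantCoeff, coeff_qD, PowerSeries.coeff_zero_X_mul]
  | succ m =>
    rw [map_add, coeff_succ_X_mul, map_zero]
    rw [map_add, map_add, coeff_qD, coeff_qD]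
    have h27 : coeff m ((27 : PowerSeries ℚ) * qD (qD C1series))
        = 27 * ((m : ℚ) * ((m : ℚ) * coeff m C1series)) := by
      have : (27 : PowerSeries ℚ) = C 27 := (map_ofNat _ _).symm
      rw [this, coeff_C_mul, coeff_qD, coeff_qD]
    have h27b : coeff m ((27 : PowerSeries ℚ) * qD C1series)
        = 27 * ((m : ℚ) * coeff m C1series) := by
      have : (27 : PowerSeries ℚ) = C 27 := (map_ofNat _ _).symm
      rw [this, coeff_C_mul, coeff_qD]
    have h6 : coeff m ((6 : PowerSeries ℚ) * C1series) = 6 * coeff m C1series := by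
      have : (6 : PowerSeries ℚ) = C 6 := (map_ofNat _ _).symm
      rw [this, coeff_C_mul]
    rw [h27, h27b, h6]
    have := c1_rec m
    push_cast
    nlinarith [this]

lemma C1_ne_zero : C1series ≠ 0 := by
  intro h
  have : constantCoeff C1series = 1 := by
    simp [C1series, ← coeff_zero_eq_constantCoeff]
  rw [h] at this
  simp at this

/-- The identity `X² − (L³−1)X + DX − (2/9)(L³−1) = 0` in `ℚ[[q]]`, where
`X = (D C1)/C1` and `L` is the unique power series with constant term `1`
satisfying `L³(1+27q) = 1`. -/
theorem stmt_0 (L X : PowerSeries ℚ)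
    (hL0 : PowerSeries.constantCoeff L = 1)
    (hL : L ^ 3 * (1 + 27 * PowerSeries.X) = 1)
    (hX : X * C1series = qD C1series) :
    X ^ 2 - (L ^ 3 - 1) * X + qD X - (2 / 9 : ℚ) • (L ^ 3 - 1) = 0 := by
  -- qD (qD C1) = (qD X + X^2) * C1
  have hdd : qD (qD C1series) = (qD X + X ^ 2) * C1series := by
    rw [← hX, qD_mul, ← hX]
    ring
  -- the ODE in terms of X
  have hode := c1_ode
  rw [hdd] at hode
  have hXC : PowerSeries.X * (27 * ((qD X + X ^ 2) * C1series) + 27 * qD C1series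
      + 6 * C1series) = (PowerSeries.X * (27 * (qD X + X ^ 2) + 27 * X + 6)) * C1series := by
    rw [← hX]; ring
  rw [hXC] at hode
  have hfac : ((qD X + X ^ 2) + PowerSeries.X * (27 * (qD X + X ^ 2) + 27 * X + 6))
      * C1series = 0 := by
    rw [add_mul, ← hode]
  have hbr : (qD X + X ^ 2) + PowerSeries.X * (27 * (qD X + X ^ 2) + 27 * X + 6) = 0 := by
    rcases mul_eq_zero.mp hfac with h | h
    · exact h
    · exact absurd h C1_ne_zero
  -- (L^3 - 1) * (1 + 27q) = -27q
  have hLq : (L ^ 3 - 1) * (1 + 27 * PowerSeries.X) = -(27 * PowerSeries.X) := by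
    rw [sub_mul, hL]; ring
  -- multiply the goal by (1 + 27q)
  have hne : (1 + 27 * PowerSeries.X : PowerSeries ℚ) ≠ 0 := by
    intro h
    have : constantCoeff (1 + 27 * PowerSeries.X : PowerSeries ℚ) = 1 := by simp
    rw [h] at this
    simp at this
  have key : (X ^ 2 - (L ^ 3 - 1) * X + qD X - (2 / 9 : ℚ) • (L ^ 3 - 1))
      * (1 + 27 * PowerSeries.X) = 0 := by
    have hsmul : ((2 / 9 : ℚ) • (L ^ 3 - 1)) = C (2/9) * (L ^ 3 - 1) := by
      rw [smul_eq_C_mul]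
    rw [hsmul]
    have expand : (X ^ 2 - (L ^ 3 - 1) * X + qD X - C (2/9) * (L ^ 3 - 1))
        * (1 + 27 * PowerSeries.X)
        = (X ^ 2 + qD X) * (1 + 27 * PowerSeries.X)
          - ((L ^ 3 - 1) * (1 + 27 * PowerSeries.X)) * X
          - C (2/9) * ((L ^ 3 - 1) * (1 + 27 * PowerSeries.X)) := by ring
    rw [expand, hLq]
    have hC : C (R := ℚ) (2/9) * (-(27 * PowerSeries.X)) = -(6 * PowerSeries.X) := by
      have h27' : (27 : PowerSeries ℚ) = C 27 := (map_ofNat _ _).symm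
      have h6' : (6 : PowerSeries ℚ) = C 6 := (map_ofNat _ _).symm
      rw [h27', h6']
      rw [show C (R := ℚ) (2/9) * -(C 27 * PowerSeries.X)
        = -((C (R := ℚ) (2/9) * C 27) * PowerSeries.X) from by ring, ← map_mul]
      norm_num
    rw [hC]
    calc (X ^ 2 + qD X) * (1 + 27 * PowerSeries.X) - -(27 * PowerSeries.X) * X
          - -(6 * PowerSeries.X)
        = (qD X + X ^ 2) + PowerSeries.X * (27 * (qD X + X ^ 2) + 27 * X + 6) := by ring
      _ = 0 := hbr
  rcases mul_eq_zero.mp key with h | h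
  · exact h
  · exact absurd h hne
end

section
/- For each i ∈ {0,1,2}, the restricted small I-function Ī_i ∈ C(z)[[q]] satisfies the Picard–Fuchs equation ( M_i^3 − 1 + 3q·M_i·(3M_i + z)·(3M_i + 2z) ) Ī_i = 0, where M_i is the operator on C(z)[[q]] sending F to ζ^i·F + z·(q·dF/dq), and the operator products denote composition (the final multiplication by 3q is applied after the composite operator M_i(3M_i+z)(3M_i+2z)). -/
/-- The operator `D = q·d/dq` on power series with coefficients in `ℂ(z)`. -/
noncomputable def qDK (F : PowerSeries (RatFunc ℂ)) : PowerSeries (RatFunc ℂ) :=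
  PowerSeries.mk fun n => (n : RatFunc ℂ) * PowerSeries.coeff n F

/-- The restricted small I-function `Ī_i` of local `ℙ²` at the fixed point `p_i`,
with specialization `λ_j = ζ^j`:
`Ī_i = ∑_d q^d ∏_{k=0}^{3d-1}(-3ζ^i − kz) / ∏_{j=0}^{2}∏_{k=1}^{d}(ζ^i − ζ^j + kz)`. -/
noncomputable def Ibar (ζ : ℂ) (i : ℕ) : PowerSeries (RatFunc ℂ) :=
  PowerSeries.mk fun d =>
    (∏ k ∈ Finset.range (3 * d),
        (RatFunc.C (-3 * ζ ^ i) - (k : RatFunc ℂ) * RatFunc.X)) /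
    (∏ j ∈ Finset.range 3, ∏ k ∈ Finset.range d,
        (RatFunc.C (ζ ^ i - ζ ^ j) + ((k : RatFunc ℂ) + 1) * RatFunc.X))

/-- The operator `M_i : F ↦ ζ^i·F + z·(q·dF/dq)` on `ℂ(z)[[q]]`. -/
noncomputable def Mop (c : ℂ) (F : PowerSeries (RatFunc ℂ)) : PowerSeries (RatFunc ℂ) :=
  PowerSeries.C (RatFunc.C c) * F + PowerSeries.C RatFunc.X * qDK F

/-- The operator `3M + z`. -/
noncomputable def M3z (c : ℂ) (F : PowerSeries (RatFunc ℂ)) : PowerSeries (RatFunc ℂ) :=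
  3 • Mop c F + PowerSeries.C RatFunc.X * F

/-- The operator `3M + 2z`. -/
noncomputable def M3z2 (c : ℂ) (F : PowerSeries (RatFunc ℂ)) : PowerSeries (RatFunc ℂ) :=
  3 • Mop c F + 2 • (PowerSeries.C RatFunc.X * F)

lemma aux_ne (a b : ℂ) (hb : b ≠ 0) : RatFunc.C a + RatFunc.C b * RatFunc.X ≠ 0 := by
  intro h
  have h0 : (algebraMap (Polynomial ℂ) (RatFunc ℂ)) (Polynomial.C a + Polynomial.C b * Polynomial.X) = 0 := by
    simpa [map_add, map_mul, RatFunc.algebraMap_C, RatFunc.algebraMap_X] using h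
  have h2 : (Polynomial.C a + Polynomial.C b * Polynomial.X : Polynomial ℂ) = 0 :=
    (map_eq_zero_iff _ (RatFunc.algebraMap_injective ℂ)).mp h0
  have := congrArg (fun p => Polynomial.coeff p 1) h2
  simp at this
  exact hb this

lemma factor_ne (a : ℂ) (k : ℕ) :
    RatFunc.C a + ((k : RatFunc ℂ) + 1) * RatFunc.X ≠ 0 := by
  have h : ((k : RatFunc ℂ) + 1) = RatFunc.C ((k : ℂ) + 1) := by
    rw [map_add, map_natCast, map_one]
  rw [h]
  exact aux_ne a _ (Nat.cast_add_one_ne_zero k)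

lemma rec_aux (N D g0 g1 g2 f1 f2 f3 : RatFunc ℂ) (hD : D ≠ 0)
    (h0 : g0 ≠ 0) (h1 : g1 ≠ 0) (h2 : g2 ≠ 0) :
    (g0 * (g1 * g2)) * ((N * (f1 * (f2 * f3))) / (D * (g0 * (g1 * g2))))
      = (f1 * (f2 * f3)) * (N / D) := by
  field_simp

lemma coeff_Mop (c : ℂ) (F : PowerSeries (RatFunc ℂ)) (n : ℕ) :
    PowerSeries.coeff n (Mop c F) =
      (RatFunc.C c + (n : RatFunc ℂ) * RatFunc.X) * PowerSeries.coeff n F := by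
  simp [Mop, qDK]
  ring

lemma coeff_M3z (c : ℂ) (F : PowerSeries (RatFunc ℂ)) (n : ℕ) :
    PowerSeries.coeff n (M3z c F) =
      (3 * (RatFunc.C c + (n : RatFunc ℂ) * RatFunc.X) + RatFunc.X) *
        PowerSeries.coeff n F := by
  rw [M3z, map_add, map_nsmul, coeff_Mop, PowerSeries.coeff_C_mul, nsmul_eq_mul]
  push_cast
  ring

lemma coeff_M3z2 (c : ℂ) (F : PowerSeries (RatFunc ℂ)) (n : ℕ) :
    PowerSeries.coeff n (M3z2 c F) =
      (3 * (RatFunc.C c + (n : RatFunc ℂ) * RatFunc.X) + 2 * RatFunc.X) *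
        PowerSeries.coeff n F := by
  rw [M3z2, map_add, map_nsmul, map_nsmul, coeff_Mop, PowerSeries.coeff_C_mul,
    nsmul_eq_mul, nsmul_eq_mul]
  push_cast
  ring

set_option maxHeartbeats 1000000 in
/-- The Picard–Fuchs equation
`(M_i³ − 1 + 3q·M_i(3M_i+z)(3M_i+2z)) Ī_i = 0` for the restricted small
I-functions of local `ℙ²` at each fixed point `p_i`, `i ∈ {0,1,2}`. -/
theorem stmt_2 (ζ : ℂ) (hζ : IsPrimitiveRoot ζ 3) (i : ℕ) (hi : i < 3) :
    Mop (ζ ^ i) (Mop (ζ ^ i) (Mop (ζ ^ i) (Ibar ζ i))) - Ibar ζ i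
      + (3 * PowerSeries.X) * Mop (ζ ^ i) (M3z (ζ ^ i) (M3z2 (ζ ^ i) (Ibar ζ i))) = 0 := by
  have hz3 : ζ ^ 3 = 1 := hζ.pow_eq_one
  have hsum : 1 + ζ + ζ ^ 2 = 0 := by
    have := hζ.geom_sum_eq_zero (by norm_num)
    simpa [Finset.sum_range_succ] using this
  have hc3 : (RatFunc.C ζ) ^ 3 = 1 := by rw [← map_pow, hz3, map_one]
  have hcs : (1 : RatFunc ℂ) + RatFunc.C ζ + (RatFunc.C ζ) ^ 2 = 0 := by
    have := congrArg RatFunc.C hsum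
    simpa [map_add, map_pow, map_one] using this
  set z := RatFunc.X (K := ℂ) with hzdef
  -- coefficient of Ibar
  have hIb : ∀ d : ℕ, PowerSeries.coeff d (Ibar ζ i) =
      (∏ k ∈ Finset.range (3 * d), (RatFunc.C (-3 * ζ ^ i) - (k : RatFunc ℂ) * z)) /
      (∏ j ∈ Finset.range 3, ∏ k ∈ Finset.range d,
        (RatFunc.C (ζ ^ i - ζ ^ j) + ((k : RatFunc ℂ) + 1) * z)) := by
    intro d; rw [Ibar, PowerSeries.coeff_mk]
  ext n
  rw [map_zero]
  rcases n with _ | n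
  · -- constant coefficient
    rw [map_add, map_sub, coeff_Mop, coeff_Mop, coeff_Mop]
    have hX0 : PowerSeries.coeff 0
        ((3 * PowerSeries.X) * Mop (ζ ^ i) (M3z (ζ ^ i) (M3z2 (ζ ^ i) (Ibar ζ i)))) = 0 := by
      simp [PowerSeries.coeff_zero_eq_constantCoeff, map_mul]
    rw [hX0, add_zero]
    have h1 : RatFunc.C (ζ ^ i) ^ 3 = 1 := by
      rw [← map_pow, ← pow_mul, mul_comm, pow_mul, hz3, one_pow, map_one]
    push_cast
    linear_combination (PowerSeries.coeff 0 (Ibar ζ i)) * h1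
  · -- coefficient n+1
    rw [map_add, map_sub, coeff_Mop, coeff_Mop, coeff_Mop]
    have hmul : (3 * PowerSeries.X) * Mop (ζ ^ i) (M3z (ζ ^ i) (M3z2 (ζ ^ i) (Ibar ζ i)))
        = PowerSeries.X * (3 * Mop (ζ ^ i) (M3z (ζ ^ i) (M3z2 (ζ ^ i) (Ibar ζ i)))) := by ring
    rw [hmul, PowerSeries.coeff_succ_X_mul]
    have h3 : PowerSeries.coeff n
        (3 * Mop (ζ ^ i) (M3z (ζ ^ i) (M3z2 (ζ ^ i) (Ibar ζ i))))
        = 3 * PowerSeries.coeff n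
            (Mop (ζ ^ i) (M3z (ζ ^ i) (M3z2 (ζ ^ i) (Ibar ζ i)))) := by
      rw [show (3 : PowerSeries (RatFunc ℂ)) = PowerSeries.C 3 from
        (map_ofNat _ 3).symm, PowerSeries.coeff_C_mul]
    rw [h3, coeff_Mop, coeff_M3z, coeff_M3z2]
    set an := PowerSeries.coeff n (Ibar ζ i) with han
    set an1 := PowerSeries.coeff (n + 1) (Ibar ζ i) with han1
    set Nn := ∏ k ∈ Finset.range (3 * n), (RatFunc.C (-3 * ζ ^ i) - (k : RatFunc ℂ) * z) with hNn
    set Dn := ∏ j ∈ Finset.range 3, ∏ k ∈ Finset.range n,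
        (RatFunc.C (ζ ^ i - ζ ^ j) + ((k : RatFunc ℂ) + 1) * z) with hDn
    have hDn_ne : Dn ≠ 0 := by
      rw [hDn, Finset.prod_ne_zero_iff]
      intro j _
      rw [Finset.prod_ne_zero_iff]
      intro k _
      exact factor_ne _ _
    have hg0 : RatFunc.C (ζ ^ i - ζ ^ 0) + ((n : RatFunc ℂ) + 1) * z ≠ 0 := factor_ne _ _
    have hg1 : RatFunc.C (ζ ^ i - ζ ^ 1) + ((n : RatFunc ℂ) + 1) * z ≠ 0 := factor_ne _ _
    have hg2 : RatFunc.C (ζ ^ i - ζ ^ 2) + ((n : RatFunc ℂ) + 1) * z ≠ 0 := factor_ne _ _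
    -- split the numerator
    have hN : ∏ k ∈ Finset.range (3 * (n + 1)), (RatFunc.C (-3 * ζ ^ i) - (k : RatFunc ℂ) * z)
        = Nn * ((RatFunc.C (-3 * ζ ^ i) - (3 * n : RatFunc ℂ) * z)
            * ((RatFunc.C (-3 * ζ ^ i) - ((3 * n : RatFunc ℂ) + 1) * z)
            * (RatFunc.C (-3 * ζ ^ i) - ((3 * n : RatFunc ℂ) + 2) * z))) := by
      have e : 3 * (n + 1) = (3 * n + 1 + 1) + 1 := by ring
      rw [e, Finset.prod_range_succ, Finset.prod_range_succ, Finset.prod_range_succ, hNn]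
      push_cast
      ring
    -- split the denominator
    have hD : (∏ j ∈ Finset.range 3, ∏ k ∈ Finset.range (n + 1),
          (RatFunc.C (ζ ^ i - ζ ^ j) + ((k : RatFunc ℂ) + 1) * z))
        = Dn * ((RatFunc.C (ζ ^ i - ζ ^ 0) + ((n : RatFunc ℂ) + 1) * z)
            * ((RatFunc.C (ζ ^ i - ζ ^ 1) + ((n : RatFunc ℂ) + 1) * z)
            * (RatFunc.C (ζ ^ i - ζ ^ 2) + ((n : RatFunc ℂ) + 1) * z))) := by
      have e : ∀ j ∈ Finset.range 3, ∏ k ∈ Finset.range (n + 1),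
            (RatFunc.C (ζ ^ i - ζ ^ j) + ((k : RatFunc ℂ) + 1) * z)
          = (∏ k ∈ Finset.range n, (RatFunc.C (ζ ^ i - ζ ^ j) + ((k : RatFunc ℂ) + 1) * z))
            * (RatFunc.C (ζ ^ i - ζ ^ j) + ((n : RatFunc ℂ) + 1) * z) := by
        intro j _
        rw [Finset.prod_range_succ]
      rw [Finset.prod_congr rfl e, Finset.prod_mul_distrib, hDn]
      have e2 : ∏ j ∈ Finset.range 3, (RatFunc.C (ζ ^ i - ζ ^ j) + ((n : RatFunc ℂ) + 1) * z)
          = (RatFunc.C (ζ ^ i - ζ ^ 0) + ((n : RatFunc ℂ) + 1) * z)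
            * ((RatFunc.C (ζ ^ i - ζ ^ 1) + ((n : RatFunc ℂ) + 1) * z)
            * (RatFunc.C (ζ ^ i - ζ ^ 2) + ((n : RatFunc ℂ) + 1) * z)) := by
        rw [Finset.prod_range_succ, Finset.prod_range_succ, Finset.prod_range_one]
        ring
      rw [e2]
    -- the recurrence
    have key : ((RatFunc.C (ζ ^ i - ζ ^ 0) + ((n : RatFunc ℂ) + 1) * z)
          * ((RatFunc.C (ζ ^ i - ζ ^ 1) + ((n : RatFunc ℂ) + 1) * z)
          * (RatFunc.C (ζ ^ i - ζ ^ 2) + ((n : RatFunc ℂ) + 1) * z))) * an1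
        = ((RatFunc.C (-3 * ζ ^ i) - (3 * n : RatFunc ℂ) * z)
            * ((RatFunc.C (-3 * ζ ^ i) - ((3 * n : RatFunc ℂ) + 1) * z)
            * (RatFunc.C (-3 * ζ ^ i) - ((3 * n : RatFunc ℂ) + 2) * z))) * an := by
      rw [han, han1, hIb, hIb, hN, hD]
      exact rec_aux _ _ _ _ _ _ _ _ hDn_ne hg0 hg1 hg2
    -- now finish with a linear combination
    simp only [map_sub, map_one, map_pow, map_neg, map_mul, map_ofNat] at key ⊢
    push_cast at key ⊢
    linear_combination key
      + ((RatFunc.C ζ ^ i + ((n : RatFunc ℂ) + 1) * z) ^ 2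
          - (RatFunc.C ζ ^ i + ((n : RatFunc ℂ) + 1) * z)) * an1 * hcs
      + (1 - (RatFunc.C ζ ^ i + ((n : RatFunc ℂ) + 1) * z)) * an1 * hc3
end

section
/- After setting t_0 = 0, the following evaluations of genus 0 correlators hold in C[[t_1, t_2, …]], where 1/(1−t_1) denotes the geometric series ∑_{m≥0} t_1^m: ⟨⟨1,1,1⟩⟩_{0,3}|_{t_0=0} = 1/(1−t_1); ⟨⟨1,1,1,1⟩⟩_{0,4}|_{t_0=0} = t_2/(1−t_1)^3; ⟨⟨1,1,1,1,1⟩⟩_{0,5}|_{t_0=0} = t_3/(1−t_1)^4 + 3 t_2^2/(1−t_1)^5; ⟨⟨1,1,1,1,1,1⟩⟩_{0,6}|_{t_0=0} = t_4/(1−t_1)^5 + 10 t_2 t_3/(1−t_1)^6 + 15 t_2^3/(1−t_1)^7. -/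
/-- Genus 0 ψ-class intersection numbers:
`⟨τ_{a_1}⋯τ_{a_n}⟩_0 = (n−3)!/(a_1!⋯a_n!)` if `a_1+⋯+a_n = n−3` (and `n ≥ 3`),
and `0` otherwise. -/
noncomputable def tauInt (a : Multiset ℕ) : ℂ :=
  if a.sum + 3 = Multiset.card a then
    (Nat.factorial (Multiset.card a - 3) : ℂ) /
      ((a.map fun i => (Nat.factorial i : ℂ)).prod)
  else 0

/-- The genus 0 correlator `⟨⟨ψ^{a_1},…,ψ^{a_n}⟩⟩_{0,n}` as an element of
`ℂ[[t_0,t_1,t_2,…]]`: its coefficient at the monomial `∏ t_i^{m i}` equals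
`⟨τ_{a_1}⋯τ_{a_n}∏τ_{b_j}⟩_0 / ∏_i (m i)!`, where the `b_j` run over the
multiset associated to `m`; this is the coefficient form of
`∑_k (1/k!) ∑_{b_1,…,b_k} ⟨τ_{a_1}⋯τ_{a_n}τ_{b_1}⋯τ_{b_k}⟩_0 t_{b_1}⋯t_{b_k}`. -/
noncomputable def corr (a : Multiset ℕ) : MvPowerSeries ℕ ℂ :=
  fun m => tauInt (a + Finsupp.toMultiset m) / (m.prod fun _ e => (Nat.factorial e : ℂ))

/-- Restriction `t_0 = 0` of a power series in `t_0, t_1, t_2, …`. -/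
noncomputable def setT0 (F : MvPowerSeries ℕ ℂ) : MvPowerSeries ℕ ℂ :=
  fun m => if m 0 = 0 then F m else 0

/-- The geometric series `1/(1−t_1) = ∑_{m≥0} t_1^m`. -/
noncomputable def geom : MvPowerSeries ℕ ℂ :=
  fun m => if m.support ⊆ {1} then 1 else 0

open Finsupp MvPowerSeries Finset

/-! ### Auxiliary lemmas -/

lemma hockey (p N : ℕ) :
    ∑ i ∈ Finset.range (N + 1), (i + p).choose p = (N + p + 1).choose (p + 1) := by
  induction N with
  | zero => simp
  | succ n ih =>
    rw [Finset.sum_range_succ, ih, show n + 1 + p + 1 = (n + p + 1) + 1 by ring,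
      Nat.choose_succ_succ (n + p + 1) p, show n + 1 + p = n + p + 1 by ring]
    exact Nat.add_comm _ _

lemma geom_apply (m : ℕ →₀ ℕ) : geom m = if m.support ⊆ {1} then 1 else 0 := rfl

lemma geom_pow (p : ℕ) (m : ℕ →₀ ℕ) :
    (geom ^ (p + 1)) m = if m.support ⊆ {1} then (((m 1 + p).choose p : ℕ) : ℂ) else 0 := by
  induction p generalizing m with
  | zero => rw [pow_one, geom_apply]; simp
  | succ p ih =>
    have h1 : (geom ^ (p + 1 + 1)) m = MvPowerSeries.coeff m (geom ^ (p + 1) * geom) := by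
      rw [pow_succ]; rfl
    rw [h1, MvPowerSeries.coeff_mul]
    by_cases h : m.support ⊆ {1}
    · have hm : m = single 1 (m 1) := support_subset_singleton.mp h
      rw [if_pos h]
      conv_lhs => rw [hm]
      rw [Finsupp.antidiagonal_single, Finset.sum_map]
      have hterm : ∀ q : ℕ × ℕ,
          (MvPowerSeries.coeff (single 1 q.1) (geom ^ (p+1))) *
            (MvPowerSeries.coeff (single 1 q.2) geom)
          = (((q.1 + p).choose p : ℕ) : ℂ) := by
        intro q
        have h1 : MvPowerSeries.coeff (single 1 q.1) (geom ^ (p+1))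
            = (geom ^ (p+1)) (single 1 q.1) := rfl
        have h2 : MvPowerSeries.coeff (single 1 q.2) geom = geom (single 1 q.2) := rfl
        rw [h1, h2, ih, geom_apply, if_pos Finsupp.support_single_subset,
          if_pos Finsupp.support_single_subset, single_eq_same, mul_one]
      simp only [Function.Embedding.coe_prodMap, Prod.map, Function.Embedding.coeFn_mk]
      calc (∑ q ∈ Finset.HasAntidiagonal.antidiagonal (m 1),
            MvPowerSeries.coeff (single 1 q.1) (geom ^ (p+1)) *
              MvPowerSeries.coeff (single 1 q.2) geom)
          = ∑ q ∈ Finset.HasAntidiagonal.antidiagonal (m 1), (((q.1 + p).choose p : ℕ) : ℂ) :=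
            Finset.sum_congr rfl fun q _ => hterm q
        _ = ((∑ q ∈ Finset.HasAntidiagonal.antidiagonal (m 1), (q.1 + p).choose p : ℕ) : ℂ) := by push_cast; rfl
        _ = (((m 1 + (p+1)).choose (p+1) : ℕ) : ℂ) := by
            rw [Finset.Nat.sum_antidiagonal_eq_sum_range_succ_mk, hockey p (m 1)]
            norm_cast
    · rw [if_neg h]
      apply Finset.sum_eq_zero
      rintro ⟨x, y⟩ hxy
      rw [Finset.HasAntidiagonal.mem_antidiagonal] at hxy
      obtain ⟨j, hj, hj1⟩ : ∃ j ∈ m.support, j ≠ 1 := by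
        by_contra hco; push_neg at hco; exact h fun j hjm => Finset.mem_singleton.mpr (hco j hjm)
      have hmj : m j ≠ 0 := Finsupp.mem_support_iff.mp hj
      have : x j ≠ 0 ∨ y j ≠ 0 := by
        by_contra hco; push_neg at hco
        have := DFunLike.congr_fun hxy j
        rw [Finsupp.add_apply, hco.1, hco.2] at this
        exact hmj this.symm
      rcases this with hx | hy
      · have hxs : ¬ x.support ⊆ {1} := fun hs =>
          hj1 (Finset.mem_singleton.mp (hs (Finsupp.mem_support_iff.mpr hx)))
        have h2 : MvPowerSeries.coeff x (geom ^ (p+1)) = (geom ^ (p+1)) x := rfl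
        rw [h2, ih, if_neg hxs, zero_mul]
      · have hys : ¬ y.support ⊆ {1} := fun hs =>
          hj1 (Finset.mem_singleton.mp (hs (Finsupp.mem_support_iff.mpr hy)))
        have h2 : MvPowerSeries.coeff y geom = geom y := rfl
        rw [h2, geom_apply, if_neg hys, mul_zero]

open scoped Classical in
lemma coeff_monomial_mul_geom (s : ℕ →₀ ℕ) (hs : s 1 = 0) (a : ℂ) (p : ℕ) (m : ℕ →₀ ℕ) :
    (MvPowerSeries.monomial s a * geom ^ (p + 1)) m
      = if ∀ i, i ≠ 1 → m i = s i then a * (((m 1 + p).choose p : ℕ) : ℂ) else 0 := by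
  have h1 : (MvPowerSeries.monomial s a * geom ^ (p + 1)) m
      = MvPowerSeries.coeff m (MvPowerSeries.monomial s a * geom ^ (p + 1)) := rfl
  rw [h1, MvPowerSeries.coeff_monomial_mul]
  by_cases hP : ∀ i, i ≠ 1 → m i = s i
  · have hle : s ≤ m := by
      intro i
      by_cases hi : i = 1
      · subst hi; rw [hs]; exact Nat.zero_le _
      · rw [hP i hi]
    rw [if_pos hle, if_pos hP]
    have h2 : MvPowerSeries.coeff (m - s) (geom ^ (p+1)) = (geom ^ (p+1)) (m - s) := rfl
    rw [h2, geom_pow]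
    have hsupp : (m - s).support ⊆ {1} := by
      intro i hi
      rw [Finsupp.mem_support_iff, Finsupp.tsub_apply] at hi
      by_contra hi1
      have hne : i ≠ 1 := fun h => hi1 (Finset.mem_singleton.mpr h)
      rw [hP i hne, Nat.sub_self] at hi
      exact hi rfl
    rw [if_pos hsupp, Finsupp.tsub_apply, hs, Nat.sub_zero]
  · rw [if_neg hP]
    by_cases hle : s ≤ m
    · rw [if_pos hle]
      push_neg at hP
      obtain ⟨j, hj1, hjv⟩ := hP
      have hsupp : ¬ (m - s).support ⊆ {1} := by
        intro hsub
        have : (m - s) j = 0 := by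
          by_contra hne
          exact hj1 (Finset.mem_singleton.mp (hsub (Finsupp.mem_support_iff.mpr hne)))
        rw [Finsupp.tsub_apply] at this
        have := hle j
        omega
      have h2 : MvPowerSeries.coeff (m - s) (geom ^ (p+1)) = (geom ^ (p+1)) (m - s) := rfl
      rw [h2, geom_pow, if_neg hsupp, mul_zero]
    · rw [if_neg hle]

lemma toMultiset_sum_eq (m : ℕ →₀ ℕ) :
    (Finsupp.toMultiset m).sum = m.sum fun i k => k * i := by
  induction m using Finsupp.induction with
  | zero => simp
  | single_add a n f ha hn ih =>
    rw [Finsupp.toMultiset_add, Multiset.sum_add, ih, Finsupp.toMultiset_single,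
      Finsupp.sum_add_index' (fun i => by simp) (fun i b c => by ring)]
    rw [Finsupp.sum_single_index (by simp)]
    simp [Multiset.nsmul_singleton, Multiset.sum_replicate, mul_comm, smul_eq_mul]

lemma toMultiset_map_fact_prod (m : ℕ →₀ ℕ) :
    (((Finsupp.toMultiset m).map fun (i : ℕ) => ((Nat.factorial i : ℂ))).prod)
      = m.prod fun (i k : ℕ) => ((Nat.factorial i : ℂ)) ^ k := by
  induction m using Finsupp.induction with
  | zero => simp
  | single_add a n f ha hn ih =>
    rw [Finsupp.toMultiset_add, Multiset.map_add, Multiset.prod_add, ih,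
      Finsupp.toMultiset_single,
      Finsupp.prod_add_index' (fun i => pow_zero _) (fun i b c => pow_add _ _ _),
      Finsupp.prod_single_index (h := fun (i k : ℕ) => ((Nat.factorial i : ℂ)) ^ k) (pow_zero _)]
    simp [Multiset.nsmul_singleton, Multiset.map_replicate, Multiset.prod_replicate]

lemma corr_coeff (n : ℕ) (m : ℕ →₀ ℕ) :
    setT0 (corr (Multiset.replicate n 0)) m =
      if m 0 = 0 ∧ (m.sum fun i k => k * i) + 3 = n + m.sum fun _ k => k then
        (((n + m.sum fun _ k => k) - 3).factorial : ℂ) /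
          ((m.prod fun i k => ((Nat.factorial i : ℂ)) ^ k) * m.prod fun _ e => ((Nat.factorial e : ℂ)))
      else 0 := by
  simp only [setT0, corr, tauInt]
  have hcard : Multiset.card (Multiset.replicate n 0 + Finsupp.toMultiset m)
      = n + m.sum fun _ k => k := by
    rw [Multiset.card_add, Multiset.card_replicate, Finsupp.card_toMultiset]; rfl
  have hsum : (Multiset.replicate n 0 + Finsupp.toMultiset m).sum = m.sum fun i k => k * i := by
    rw [Multiset.sum_add, Multiset.sum_replicate, toMultiset_sum_eq]; simp
  have hmap : ((Multiset.replicate n 0 + Finsupp.toMultiset m).map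
        fun (i : ℕ) => ((Nat.factorial i : ℂ))).prod
      = m.prod fun (i k : ℕ) => ((Nat.factorial i : ℂ)) ^ k := by
    rw [Multiset.map_add, Multiset.prod_add, Multiset.map_replicate, Multiset.prod_replicate,
      toMultiset_map_fact_prod]
    norm_num
  rw [hcard, hsum, hmap]
  by_cases h0 : m 0 = 0
  · by_cases hc : (m.sum fun i k => k * i) + 3 = n + m.sum fun _ k => k
    · rw [if_pos h0, if_pos hc, if_pos ⟨h0, hc⟩, div_div]
    · rw [if_pos h0, if_neg hc, if_neg (fun h => hc h.2), zero_div]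
  · rw [if_neg h0, if_neg (fun h => h0 h.1)]

lemma sum_range5 (m : ℕ →₀ ℕ) (h5 : ∀ i, 5 ≤ i → m i = 0) (f : ℕ → ℕ → ℕ)
    (hf : ∀ i, f i 0 = 0) :
    m.sum f = f 0 (m 0) + f 1 (m 1) + f 2 (m 2) + f 3 (m 3) + f 4 (m 4) := by
  have hsub : m.support ⊆ Finset.range 5 := by
    intro i hi
    rw [Finset.mem_range]
    by_contra h
    exact Finsupp.mem_support_iff.mp hi (h5 i (by omega))
  rw [Finsupp.sum_of_support_subset m hsub f (fun i _ => hf i)]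
  simp [Finset.sum_range_succ]

lemma prod_range5 (m : ℕ →₀ ℕ) (h5 : ∀ i, 5 ≤ i → m i = 0) (f : ℕ → ℕ → ℂ)
    (hf : ∀ i, f i 0 = 1) :
    m.prod f = f 0 (m 0) * f 1 (m 1) * f 2 (m 2) * f 3 (m 3) * f 4 (m 4) := by
  have hsub : m.support ⊆ Finset.range 5 := by
    intro i hi
    rw [Finset.mem_range]
    by_contra h
    exact Finsupp.mem_support_iff.mp hi (h5 i (by omega))
  rw [Finsupp.prod_of_support_subset m hsub f (fun i _ => hf i)]
  simp [Finset.prod_range_succ]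

lemma bound (m : ℕ →₀ ℕ) (c : ℕ) (hc3 : c ≤ 3) (h0 : m 0 = 0)
    (hc : (m.sum fun i k => k * i) = c + m.sum fun _ k => k) :
    (∀ i, 5 ≤ i → m i = 0) ∧ m 2 + 2 * m 3 + 3 * m 4 = c := by
  have hsplit : (m.sum fun i k => k * i)
      = (m.sum fun i k => k * (i - 1)) + m.sum fun _ k => k := by
    rw [Finsupp.sum, Finsupp.sum, Finsupp.sum, ← Finset.sum_add_distrib]
    apply Finset.sum_congr rfl
    intro i hi
    have hi0 : i ≠ 0 := by
      intro h; exact Finsupp.mem_support_iff.mp hi (h ▸ h0)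
    have h1 : i - 1 + 1 = i := by omega
    calc m i * i = m i * (i - 1 + 1) := by rw [h1]
      _ = m i * (i - 1) + m i := by ring
  have hD : (m.sum fun i k => k * (i - 1)) = c := by omega
  have hle : ∀ i, m i * (i - 1) ≤ c := by
    intro i
    by_cases hi : i ∈ m.support
    · rw [← hD]
      exact Finset.single_le_sum (f := fun i => m i * (i - 1)) (fun j _ => Nat.zero_le _) hi
    · rw [Finsupp.notMem_support_iff.mp hi]; simp
  have h5 : ∀ i, 5 ≤ i → m i = 0 := by
    intro i hi
    by_contra hne
    have h1 : i - 1 ≤ m i * (i - 1) := Nat.le_mul_of_pos_left _ (Nat.pos_of_ne_zero hne)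
    have := hle i
    omega
  refine ⟨h5, ?_⟩
  rw [sum_range5 m h5 _ (fun i => by simp)] at hD
  simp at hD
  omega

lemma sval (v2 v3 v4 : ℕ) (i : ℕ) :
    (single 2 v2 + single 3 v3 + single 4 v4 : ℕ →₀ ℕ) i
      = if i = 2 then v2 else if i = 3 then v3 else if i = 4 then v4 else 0 := by
  rcases Decidable.em (i = 2) with h2 | h2
  · subst h2; simp
  rcases Decidable.em (i = 3) with h3 | h3
  · subst h3; simp
  rcases Decidable.em (i = 4) with h4 | h4
  · subst h4; simp
  simp [Finsupp.single_apply, Finsupp.add_apply, h2, h3, h4, Ne.symm]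

open scoped Classical in
lemma term_coeff (v2 v3 v4 : ℕ) (a : ℂ) (p : ℕ) (m : ℕ →₀ ℕ) :
    (MvPowerSeries.monomial ((single 2 v2 + single 3 v3 + single 4 v4 : ℕ →₀ ℕ)) a
        * geom ^ (p + 1)) m
      = if m 0 = 0 ∧ m 2 = v2 ∧ m 3 = v3 ∧ m 4 = v4 ∧ ∀ i, 5 ≤ i → m i = 0
        then a * (((m 1 + p).choose p : ℕ) : ℂ) else 0 := by
  rw [coeff_monomial_mul_geom _ (by rw [sval]; norm_num) a p m]
  have hiff : (∀ i, i ≠ 1 → m i = (single 2 v2 + single 3 v3 + single 4 v4 : ℕ →₀ ℕ) i)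
      ↔ (m 0 = 0 ∧ m 2 = v2 ∧ m 3 = v3 ∧ m 4 = v4 ∧ ∀ i, 5 ≤ i → m i = 0) := by
    constructor
    · intro h
      refine ⟨?_, ?_, ?_, ?_, ?_⟩
      · rw [h 0 (by omega), sval]; norm_num
      · rw [h 2 (by omega), sval]; norm_num
      · rw [h 3 (by omega), sval]; norm_num
      · rw [h 4 (by omega), sval]; norm_num
      · intro i hi
        rw [h i (by omega), sval]
        have h2 : i ≠ 2 := by omega
        have h3 : i ≠ 3 := by omega
        have h4 : i ≠ 4 := by omega
        simp [h2, h3, h4]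
    · rintro ⟨h0, h2, h3, h4, h5⟩ i hi
      rw [sval]
      rcases Decidable.em (i = 0) with h | h
      · subst h; simpa using h0
      rcases Decidable.em (i = 2) with h' | h'
      · subst h'; simpa using h2
      rcases Decidable.em (i = 3) with h'' | h''
      · subst h''; simpa using h3
      rcases Decidable.em (i = 4) with h''' | h'''
      · subst h'''; simpa using h4
      have h5i : 5 ≤ i := by omega
      simp [h', h'', h''', h5 i h5i]
  by_cases hP : m 0 = 0 ∧ m 2 = v2 ∧ m 3 = v3 ∧ m 4 = v4 ∧ ∀ i, 5 ≤ i → m i = 0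
  · rw [if_pos (hiff.mpr hP), if_pos hP]
  · rw [if_neg (fun h => hP (hiff.mp h)), if_neg hP]

lemma arith (m1 q a D : ℕ) (hD : a * D = Nat.factorial q) (hD0 : D ≠ 0) :
    (((m1 + q).factorial : ℕ) : ℂ) / ((D : ℂ) * ((Nat.factorial m1 : ℕ) : ℂ))
      = (a : ℂ) * (((m1 + q).choose q : ℕ) : ℂ) := by
  have key : (m1 + q).choose q * q.factorial * m1.factorial = (m1 + q).factorial := by
    have h := Nat.choose_mul_factorial_mul_factorial (Nat.le_add_left q m1)
    simpa using h
  rw [div_eq_iff]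
  · rw [← key, ← hD]
    push_cast
    ring
  · apply mul_ne_zero
    · exact_mod_cast hD0
    · exact_mod_cast m1.factorial_ne_zero

lemma conj4 : setT0 (corr (Multiset.replicate 4 0)) = MvPowerSeries.X 2 * geom ^ 3 := by
  have eA : (MvPowerSeries.X 2 * geom ^ 3 : MvPowerSeries ℕ ℂ)
      = MvPowerSeries.monomial ((single 2 1 + single 3 0 + single 4 0 : ℕ →₀ ℕ)) 1
          * geom ^ (2 + 1) := by
    have hs : ((single 2 1 + single 3 0 + single 4 0 : ℕ →₀ ℕ)) = single 2 1 := by simp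
    rw [hs, ← X_def]
  funext m
  rw [corr_coeff 4 m, eA, term_coeff]
  by_cases hC : m 0 = 0 ∧ (m.sum fun i k => k * i) + 3 = 4 + m.sum fun _ k => k
  · obtain ⟨h0, hc⟩ := hC
    obtain ⟨h5, hsol⟩ := bound m 1 (by norm_num) h0 (by omega)
    rw [if_pos ⟨h0, hc⟩]
    have h2 : m 2 = 1 := by omega
    have h3 : m 3 = 0 := by omega
    have h4 : m 4 = 0 := by omega
    rw [if_pos ⟨h0, h2, h3, h4, h5⟩]
    have hN : 4 + (m.sum fun _ k => k) - 3 = m 1 + 2 := by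
      rw [sum_range5 m h5 _ (fun i => rfl)]; omega
    have hP : (m.prod fun i k => ((Nat.factorial i : ℂ)) ^ k) = 2 := by
      rw [prod_range5 m h5 _ (fun i => pow_zero _), h0, h2, h3, h4]
      norm_num [Nat.factorial]
    have hQ : (m.prod fun _ e => ((Nat.factorial e : ℂ))) = ((Nat.factorial (m 1) : ℕ) : ℂ) := by
      rw [prod_range5 m h5 _ (fun i => by norm_num), h0, h2, h3, h4]
      norm_num [Nat.factorial]
    rw [hN, hP, hQ]
    have h := arith (m 1) 2 1 2 (by norm_num [Nat.factorial]) (by norm_num)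
    push_cast at h ⊢
    rw [h]
  · have hA : ¬(m 0 = 0 ∧ m 2 = 1 ∧ m 3 = 0 ∧ m 4 = 0 ∧ ∀ i, 5 ≤ i → m i = 0) := by
      rintro ⟨h0, h2, h3, h4, h5⟩
      exact hC ⟨h0, by
        rw [sum_range5 m h5 _ (fun i => Nat.zero_mul i), sum_range5 m h5 _ (fun i => rfl)]
        omega⟩
    rw [if_neg hC, if_neg hA]

lemma conj3 : setT0 (corr (Multiset.replicate 3 0)) = geom := by
  have eA : geom
      = MvPowerSeries.monomial ((single 2 0 + single 3 0 + single 4 0 : ℕ →₀ ℕ)) 1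
          * geom ^ (0 + 1) := by
    have hs : ((single 2 0 + single 3 0 + single 4 0 : ℕ →₀ ℕ)) = 0 := by simp
    rw [hs, monomial_zero_eq_C_apply, map_one, one_mul, zero_add, pow_one]
  funext m
  rw [corr_coeff 3 m, eA, term_coeff]
  by_cases hC : m 0 = 0 ∧ (m.sum fun i k => k * i) + 3 = 3 + m.sum fun _ k => k
  · obtain ⟨h0, hc⟩ := hC
    obtain ⟨h5, hsol⟩ := bound m 0 (by norm_num) h0 (by omega)
    rw [if_pos ⟨h0, hc⟩]
    have h2 : m 2 = 0 := by omega
    have h3 : m 3 = 0 := by omega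
    have h4 : m 4 = 0 := by omega
    rw [if_pos ⟨h0, h2, h3, h4, h5⟩]
    have hN : 3 + (m.sum fun _ k => k) - 3 = m 1 + 0 := by
      rw [sum_range5 m h5 _ (fun i => rfl)]; omega
    have hP : (m.prod fun i k => ((Nat.factorial i : ℂ)) ^ k) = 1 := by
      rw [prod_range5 m h5 _ (fun i => pow_zero _), h0, h2, h3, h4]
      norm_num [Nat.factorial]
    have hQ : (m.prod fun _ e => ((Nat.factorial e : ℂ))) = ((Nat.factorial (m 1) : ℕ) : ℂ) := by
      rw [prod_range5 m h5 _ (fun i => by norm_num), h0, h2, h3, h4]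
      norm_num [Nat.factorial]
    rw [hN, hP, hQ]
    have h := arith (m 1) 0 1 1 (by norm_num [Nat.factorial]) (by norm_num)
    push_cast at h ⊢
    rw [h]
  · have hA : ¬(m 0 = 0 ∧ m 2 = 0 ∧ m 3 = 0 ∧ m 4 = 0 ∧ ∀ i, 5 ≤ i → m i = 0) := by
      rintro ⟨h0, h2, h3, h4, h5⟩
      exact hC ⟨h0, by
        rw [sum_range5 m h5 _ (fun i => Nat.zero_mul i), sum_range5 m h5 _ (fun i => rfl)]
        omega⟩
    rw [if_neg hC, if_neg hA]

lemma conj5 : setT0 (corr (Multiset.replicate 5 0)) =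
    MvPowerSeries.X 3 * geom ^ 4 + 3 * MvPowerSeries.X 2 ^ 2 * geom ^ 5 := by
  have eA : (MvPowerSeries.X 3 * geom ^ 4 : MvPowerSeries ℕ ℂ)
      = MvPowerSeries.monomial ((single 2 0 + single 3 1 + single 4 0 : ℕ →₀ ℕ)) 1
          * geom ^ (3 + 1) := by
    have hs : ((single 2 0 + single 3 1 + single 4 0 : ℕ →₀ ℕ)) = single 3 1 := by simp
    rw [hs, ← X_def]
  have eB : (3 * MvPowerSeries.X 2 ^ 2 * geom ^ 5 : MvPowerSeries ℕ ℂ)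
      = MvPowerSeries.monomial ((single 2 2 + single 3 0 + single 4 0 : ℕ →₀ ℕ)) 3
          * geom ^ (4 + 1) := by
    have hs : ((single 2 2 + single 3 0 + single 4 0 : ℕ →₀ ℕ)) = 0 + single 2 2 := by simp
    have h3' : (3 : MvPowerSeries ℕ ℂ) = MvPowerSeries.monomial 0 (3 : ℂ) := by
      rw [monomial_zero_eq_C_apply]; exact (map_ofNat (C (σ := ℕ) (R := ℂ)) 3).symm
    rw [hs, X_pow_eq, h3', monomial_mul_monomial, mul_one]
  funext m
  have happ : (MvPowerSeries.X 3 * geom ^ 4 + 3 * MvPowerSeries.X 2 ^ 2 * geom ^ 5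
        : MvPowerSeries ℕ ℂ) m
      = (MvPowerSeries.X 3 * geom ^ 4 : MvPowerSeries ℕ ℂ) m
        + (3 * MvPowerSeries.X 2 ^ 2 * geom ^ 5 : MvPowerSeries ℕ ℂ) m := rfl
  rw [corr_coeff 5 m, happ, eA, eB, term_coeff, term_coeff]
  by_cases hC : m 0 = 0 ∧ (m.sum fun i k => k * i) + 3 = 5 + m.sum fun _ k => k
  · obtain ⟨h0, hc⟩ := hC
    obtain ⟨h5, hsol⟩ := bound m 2 (by norm_num) h0 (by omega)
    rw [if_pos ⟨h0, hc⟩]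
    have hcase : (m 2 = 0 ∧ m 3 = 1 ∧ m 4 = 0) ∨ (m 2 = 2 ∧ m 3 = 0 ∧ m 4 = 0) := by omega
    rcases hcase with ⟨h2, h3, h4⟩ | ⟨h2, h3, h4⟩
    · rw [if_pos ⟨h0, h2, h3, h4, h5⟩,
        if_neg (fun h => by obtain ⟨_, x2, x3, x4, _⟩ := h; omega)]
      have hN : 5 + (m.sum fun _ k => k) - 3 = m 1 + 3 := by
        rw [sum_range5 m h5 _ (fun i => rfl)]; omega
      have hP : (m.prod fun i k => ((Nat.factorial i : ℂ)) ^ k) = 6 := by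
        rw [prod_range5 m h5 _ (fun i => pow_zero _), h0, h2, h3, h4]
        norm_num [Nat.factorial]
      have hQ : (m.prod fun _ e => ((Nat.factorial e : ℂ))) = ((Nat.factorial (m 1) : ℕ) : ℂ) := by
        rw [prod_range5 m h5 _ (fun i => by norm_num), h0, h2, h3, h4]
        norm_num [Nat.factorial]
      rw [hN, hP, hQ]
      have h := arith (m 1) 3 1 6 (by norm_num [Nat.factorial]) (by norm_num)
      push_cast at h ⊢
      rw [h]; ring
    · rw [if_neg (fun h => by obtain ⟨_, x2, x3, x4, _⟩ := h; omega),
        if_pos ⟨h0, h2, h3, h4, h5⟩]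
      have hN : 5 + (m.sum fun _ k => k) - 3 = m 1 + 4 := by
        rw [sum_range5 m h5 _ (fun i => rfl)]; omega
      have hP : (m.prod fun i k => ((Nat.factorial i : ℂ)) ^ k) = 4 := by
        rw [prod_range5 m h5 _ (fun i => pow_zero _), h0, h2, h3, h4]
        norm_num [Nat.factorial]
      have hQ : (m.prod fun _ e => ((Nat.factorial e : ℂ)))
          = 2 * ((Nat.factorial (m 1) : ℕ) : ℂ) := by
        rw [prod_range5 m h5 _ (fun i => by norm_num), h0, h2, h3, h4]
        norm_num [Nat.factorial]; ring
      rw [hN, hP, hQ]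
      have h := arith (m 1) 4 3 8 (by norm_num [Nat.factorial]) (by norm_num)
      push_cast at h ⊢
      rw [show (4 : ℂ) * (2 * (Nat.factorial (m 1) : ℂ)) = 8 * (Nat.factorial (m 1) : ℂ) by ring,
        h]
      ring
  · have hA : ¬(m 0 = 0 ∧ m 2 = 0 ∧ m 3 = 1 ∧ m 4 = 0 ∧ ∀ i, 5 ≤ i → m i = 0) := by
      rintro ⟨h0, h2, h3, h4, h5⟩
      exact hC ⟨h0, by
        rw [sum_range5 m h5 _ (fun i => Nat.zero_mul i), sum_range5 m h5 _ (fun i => rfl)]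
        omega⟩
    have hB : ¬(m 0 = 0 ∧ m 2 = 2 ∧ m 3 = 0 ∧ m 4 = 0 ∧ ∀ i, 5 ≤ i → m i = 0) := by
      rintro ⟨h0, h2, h3, h4, h5⟩
      exact hC ⟨h0, by
        rw [sum_range5 m h5 _ (fun i => Nat.zero_mul i), sum_range5 m h5 _ (fun i => rfl)]
        omega⟩
    rw [if_neg hC, if_neg hA, if_neg hB]
    norm_num

lemma conj6 : setT0 (corr (Multiset.replicate 6 0)) =
    MvPowerSeries.X 4 * geom ^ 5
      + 10 * MvPowerSeries.X 2 * MvPowerSeries.X 3 * geom ^ 6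
      + 15 * MvPowerSeries.X 2 ^ 3 * geom ^ 7 := by
  have eA : (MvPowerSeries.X 4 * geom ^ 5 : MvPowerSeries ℕ ℂ)
      = MvPowerSeries.monomial ((single 2 0 + single 3 0 + single 4 1 : ℕ →₀ ℕ)) 1
          * geom ^ (4 + 1) := by
    have hs : ((single 2 0 + single 3 0 + single 4 1 : ℕ →₀ ℕ)) = single 4 1 := by simp
    rw [hs, ← X_def]
  have eB : (10 * MvPowerSeries.X 2 * MvPowerSeries.X 3 * geom ^ 6 : MvPowerSeries ℕ ℂ)
      = MvPowerSeries.monomial ((single 2 1 + single 3 1 + single 4 0 : ℕ →₀ ℕ)) 10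
          * geom ^ (5 + 1) := by
    have hs : ((single 2 1 + single 3 1 + single 4 0 : ℕ →₀ ℕ))
        = 0 + single 2 1 + single 3 1 := by simp
    have h10 : (10 : MvPowerSeries ℕ ℂ) = MvPowerSeries.monomial 0 (10 : ℂ) := by
      rw [monomial_zero_eq_C_apply]; exact (map_ofNat (C (σ := ℕ) (R := ℂ)) 10).symm
    rw [hs, h10, X_def, X_def, monomial_mul_monomial, monomial_mul_monomial, mul_one, mul_one]
  have eC : (15 * MvPowerSeries.X 2 ^ 3 * geom ^ 7 : MvPowerSeries ℕ ℂ)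
      = MvPowerSeries.monomial ((single 2 3 + single 3 0 + single 4 0 : ℕ →₀ ℕ)) 15
          * geom ^ (6 + 1) := by
    have hs : ((single 2 3 + single 3 0 + single 4 0 : ℕ →₀ ℕ)) = 0 + single 2 3 := by simp
    have h15 : (15 : MvPowerSeries ℕ ℂ) = MvPowerSeries.monomial 0 (15 : ℂ) := by
      rw [monomial_zero_eq_C_apply]; exact (map_ofNat (C (σ := ℕ) (R := ℂ)) 15).symm
    rw [hs, X_pow_eq, h15, monomial_mul_monomial, mul_one]
  funext m
  have happ : (MvPowerSeries.X 4 * geom ^ 5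
        + 10 * MvPowerSeries.X 2 * MvPowerSeries.X 3 * geom ^ 6
        + 15 * MvPowerSeries.X 2 ^ 3 * geom ^ 7 : MvPowerSeries ℕ ℂ) m
      = (MvPowerSeries.X 4 * geom ^ 5 : MvPowerSeries ℕ ℂ) m
        + (10 * MvPowerSeries.X 2 * MvPowerSeries.X 3 * geom ^ 6 : MvPowerSeries ℕ ℂ) m
        + (15 * MvPowerSeries.X 2 ^ 3 * geom ^ 7 : MvPowerSeries ℕ ℂ) m := rfl
  rw [corr_coeff 6 m, happ, eA, eB, eC, term_coeff, term_coeff, term_coeff]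
  by_cases hC : m 0 = 0 ∧ (m.sum fun i k => k * i) + 3 = 6 + m.sum fun _ k => k
  · obtain ⟨h0, hc⟩ := hC
    obtain ⟨h5, hsol⟩ := bound m 3 (by norm_num) h0 (by omega)
    rw [if_pos ⟨h0, hc⟩]
    have hcase : (m 2 = 0 ∧ m 3 = 0 ∧ m 4 = 1) ∨ (m 2 = 1 ∧ m 3 = 1 ∧ m 4 = 0)
        ∨ (m 2 = 3 ∧ m 3 = 0 ∧ m 4 = 0) := by omega
    rcases hcase with ⟨h2, h3, h4⟩ | ⟨h2, h3, h4⟩ | ⟨h2, h3, h4⟩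
    · rw [if_pos ⟨h0, h2, h3, h4, h5⟩,
        if_neg (fun h => by obtain ⟨_, x2, x3, x4, _⟩ := h; omega),
        if_neg (fun h => by obtain ⟨_, x2, x3, x4, _⟩ := h; omega)]
      have hN : 6 + (m.sum fun _ k => k) - 3 = m 1 + 4 := by
        rw [sum_range5 m h5 _ (fun i => rfl)]; omega
      have hP : (m.prod fun i k => ((Nat.factorial i : ℂ)) ^ k) = 24 := by
        rw [prod_range5 m h5 _ (fun i => pow_zero _), h0, h2, h3, h4]
        norm_num [Nat.factorial]
      have hQ : (m.prod fun _ e => ((Nat.factorial e : ℂ))) = ((Nat.factorial (m 1) : ℕ) : ℂ) := by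
        rw [prod_range5 m h5 _ (fun i => by norm_num), h0, h2, h3, h4]
        norm_num [Nat.factorial]
      rw [hN, hP, hQ]
      have h := arith (m 1) 4 1 24 (by norm_num [Nat.factorial]) (by norm_num)
      push_cast at h ⊢
      rw [h]; ring
    · rw [if_neg (fun h => by obtain ⟨_, x2, x3, x4, _⟩ := h; omega),
        if_pos ⟨h0, h2, h3, h4, h5⟩,
        if_neg (fun h => by obtain ⟨_, x2, x3, x4, _⟩ := h; omega)]
      have hN : 6 + (m.sum fun _ k => k) - 3 = m 1 + 5 := by
        rw [sum_range5 m h5 _ (fun i => rfl)]; omega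
      have hP : (m.prod fun i k => ((Nat.factorial i : ℂ)) ^ k) = 12 := by
        rw [prod_range5 m h5 _ (fun i => pow_zero _), h0, h2, h3, h4]
        norm_num [Nat.factorial]
      have hQ : (m.prod fun _ e => ((Nat.factorial e : ℂ))) = ((Nat.factorial (m 1) : ℕ) : ℂ) := by
        rw [prod_range5 m h5 _ (fun i => by norm_num), h0, h2, h3, h4]
        norm_num [Nat.factorial]
      rw [hN, hP, hQ]
      have h := arith (m 1) 5 10 12 (by norm_num [Nat.factorial]) (by norm_num)
      push_cast at h ⊢
      rw [h]; ring
    · rw [if_neg (fun h => by obtain ⟨_, x2, x3, x4, _⟩ := h; omega),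
        if_neg (fun h => by obtain ⟨_, x2, x3, x4, _⟩ := h; omega),
        if_pos ⟨h0, h2, h3, h4, h5⟩]
      have hN : 6 + (m.sum fun _ k => k) - 3 = m 1 + 6 := by
        rw [sum_range5 m h5 _ (fun i => rfl)]; omega
      have hP : (m.prod fun i k => ((Nat.factorial i : ℂ)) ^ k) = 8 := by
        rw [prod_range5 m h5 _ (fun i => pow_zero _), h0, h2, h3, h4]
        norm_num [Nat.factorial]
      have hQ : (m.prod fun _ e => ((Nat.factorial e : ℂ)))
          = 6 * ((Nat.factorial (m 1) : ℕ) : ℂ) := by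
        rw [prod_range5 m h5 _ (fun i => by norm_num), h0, h2, h3, h4]
        norm_num [Nat.factorial]; ring
      rw [hN, hP, hQ]
      have h := arith (m 1) 6 15 48 (by norm_num [Nat.factorial]) (by norm_num)
      push_cast at h ⊢
      rw [show (8 : ℂ) * (6 * (Nat.factorial (m 1) : ℂ)) = 48 * (Nat.factorial (m 1) : ℂ) by ring,
        h]
      ring
  · have hA : ¬(m 0 = 0 ∧ m 2 = 0 ∧ m 3 = 0 ∧ m 4 = 1 ∧ ∀ i, 5 ≤ i → m i = 0) := by
      rintro ⟨h0, h2, h3, h4, h5⟩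
      exact hC ⟨h0, by
        rw [sum_range5 m h5 _ (fun i => Nat.zero_mul i), sum_range5 m h5 _ (fun i => rfl)]
        omega⟩
    have hB : ¬(m 0 = 0 ∧ m 2 = 1 ∧ m 3 = 1 ∧ m 4 = 0 ∧ ∀ i, 5 ≤ i → m i = 0) := by
      rintro ⟨h0, h2, h3, h4, h5⟩
      exact hC ⟨h0, by
        rw [sum_range5 m h5 _ (fun i => Nat.zero_mul i), sum_range5 m h5 _ (fun i => rfl)]
        omega⟩
    have hCc : ¬(m 0 = 0 ∧ m 2 = 3 ∧ m 3 = 0 ∧ m 4 = 0 ∧ ∀ i, 5 ≤ i → m i = 0) := by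
      rintro ⟨h0, h2, h3, h4, h5⟩
      exact hC ⟨h0, by
        rw [sum_range5 m h5 _ (fun i => Nat.zero_mul i), sum_range5 m h5 _ (fun i => rfl)]
        omega⟩
    rw [if_neg hC, if_neg hA, if_neg hB, if_neg hCc]
    norm_num

/-- Evaluations of genus 0 correlators after setting `t_0 = 0`. -/
theorem stmt_10 :
    setT0 (corr (Multiset.replicate 3 0)) = geom ∧
    setT0 (corr (Multiset.replicate 4 0)) = MvPowerSeries.X 2 * geom ^ 3 ∧
    setT0 (corr (Multiset.replicate 5 0)) =
      MvPowerSeries.X 3 * geom ^ 4 + 3 * MvPowerSeries.X 2 ^ 2 * geom ^ 5 ∧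
    setT0 (corr (Multiset.replicate 6 0)) =
      MvPowerSeries.X 4 * geom ^ 5
        + 10 * MvPowerSeries.X 2 * MvPowerSeries.X 3 * geom ^ 6
        + 15 * MvPowerSeries.X 2 ^ 3 * geom ^ 7 :=
  ⟨conj3, conj4, conj5, conj6⟩
end

section
/- For every n ≥ 3, the series F_n := ⟨⟨1,…,1⟩⟩_{0,n}|_{t_0=0} lies in the subring C[1/(1−t_1)][t_2,…,t_{n−2}] of C[[t_1,t_2,…]] (where 1/(1−t_1) = ∑_{m≥0} t_1^m), and, viewed in C(t_1)[t_2,t_3,…], F_n is homogeneous of degree n−3 for the grading over C(t_1) in which deg(t_i) = i−1 for i ≥ 2. -/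
namespace Stmt11Aux

open Finset

lemma coeff_geom (m : ℕ →₀ ℕ) :
    MvPowerSeries.coeff m geom = if m.support ⊆ {1} then 1 else 0 := rfl

/-- Coefficients of powers of the geometric series. -/
lemma coeff_geom_pow (p : ℕ) (m : ℕ →₀ ℕ) :
    MvPowerSeries.coeff m (geom ^ (p + 1)) =
      if m.support ⊆ {1} then (((m 1 + p).choose p : ℕ) : ℂ) else 0 := by
  induction p generalizing m with
  | zero => simp [pow_one, coeff_geom]
  | succ p ih =>
    rw [pow_succ, MvPowerSeries.coeff_mul]
    by_cases hm : m.support ⊆ {1}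
    · obtain ⟨b, rfl⟩ := Finsupp.support_subset_singleton'.mp hm
      rw [if_pos hm, Finsupp.antidiagonal_single, Finset.sum_map]
      have hstep : ∀ q ∈ Finset.HasAntidiagonal.antidiagonal b,
          MvPowerSeries.coeff
              ((Function.Embedding.prodMap ⟨_, Finsupp.single_injective 1⟩
                ⟨_, Finsupp.single_injective 1⟩) q).1 (geom ^ (p + 1)) *
            MvPowerSeries.coeff
              ((Function.Embedding.prodMap ⟨_, Finsupp.single_injective 1⟩
                ⟨_, Finsupp.single_injective 1⟩) q).2 geom
          = (((q.1 + p).choose p : ℕ) : ℂ) := by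
        rintro ⟨i, j⟩ hq
        simp only [Function.Embedding.coe_prodMap, Function.Embedding.coeFn_mk,
          Prod.map_apply, Prod.map_fst, Prod.map_snd]
        rw [ih, coeff_geom, if_pos Finsupp.support_single_subset,
          if_pos Finsupp.support_single_subset, Finsupp.single_eq_same, mul_one]
      rw [Finset.sum_congr rfl hstep]
      rw [Finset.Nat.sum_antidiagonal_eq_sum_range_succ_mk]
      rw [← Nat.cast_sum]
      rw [Nat.sum_range_add_choose b p]
      rw [Finsupp.single_eq_same]
      have : b + p + 1 = b + (p + 1) := by omega
      rw [this]
    · rw [if_neg hm]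
      apply Finset.sum_eq_zero
      intro q hq
      rw [Finset.HasAntidiagonal.mem_antidiagonal] at hq
      obtain ⟨i, hi, hi1⟩ : ∃ i, m i ≠ 0 ∧ i ≠ 1 := by
        by_contra h
        push_neg at h
        exact hm fun i his =>
          Finset.mem_singleton.mpr (h i (Finsupp.mem_support_iff.mp his))
      have hq' : q.1 i + q.2 i = m i := by
        rw [← hq]; rfl
      rcases Nat.eq_zero_or_pos (q.1 i) with h1 | h1
      · have h2 : q.2 i ≠ 0 := by omega
        have : ¬ q.2.support ⊆ {1} := fun h =>
          hi1 (Finset.mem_singleton.mp (h (Finsupp.mem_support_iff.mpr h2)))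
        rw [coeff_geom, if_neg this, mul_zero]
      · have : ¬ q.1.support ⊆ {1} := fun h =>
          hi1 (Finset.mem_singleton.mp (h (Finsupp.mem_support_iff.mpr (by omega))))
        rw [ih, if_neg this, zero_mul]

/-- A monomial is the product of the variables in any finset containing its support. -/
lemma monomial_eq_prod (s : Finset ℕ) (f : ℕ →₀ ℕ) (hf : f.support ⊆ s) :
    (MvPowerSeries.monomial f (1 : ℂ)) = ∏ i ∈ s, MvPowerSeries.X (σ := ℕ) i ^ f i := by
  classical
  induction s using Finset.induction generalizing f with
  | empty =>
    have : f = 0 := by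
      ext i
      by_contra h
      exact absurd (hf (Finsupp.mem_support_iff.mpr h)) (Finset.notMem_empty i)
    simp [this, MvPowerSeries.monomial_zero_one]
  | @insert a s ha ih =>
    have h2 : (f.erase a).support ⊆ s := by
      intro i hi
      rw [Finsupp.support_erase] at hi
      rcases Finset.mem_insert.mp (hf (Finset.mem_of_mem_erase hi)) with h | h
      · exact absurd h (Finset.ne_of_mem_erase hi)
      · exact h
    rw [Finset.prod_insert ha]
    have hprod : ∏ i ∈ s, (MvPowerSeries.X i : MvPowerSeries ℕ ℂ) ^ f i
        = ∏ i ∈ s, (MvPowerSeries.X i : MvPowerSeries ℕ ℂ) ^ (f.erase a) i := by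
      refine Finset.prod_congr rfl fun i hi => ?_
      rw [Finsupp.erase_ne (by rintro rfl; exact ha hi)]
    rw [hprod, ← ih (f.erase a) h2, MvPowerSeries.X_pow_eq,
      MvPowerSeries.monomial_mul_monomial, one_mul, Finsupp.single_add_erase]

lemma sum_toMultiset (m : ℕ →₀ ℕ) :
    (Finsupp.toMultiset m).sum = m.sum fun i e => e * i := by
  induction m using Finsupp.induction with
  | zero => simp
  | single_add a k f haf hk ih =>
    rw [Finsupp.toMultiset_add, Multiset.sum_add, ih, Finsupp.toMultiset_single,
      Multiset.nsmul_singleton, Multiset.sum_replicate, smul_eq_mul,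
      Finsupp.sum_add_index' (h := fun (i e : ℕ) => e * i) (fun _ => zero_mul _)
        (fun _ b c => add_mul b c _),
      Finsupp.sum_single_index (h := fun (i e : ℕ) => e * i) (zero_mul a)]

/-- Splitting of the degree sum when `m 0 = 0`. -/
lemma sum_split (m : ℕ →₀ ℕ) (h0 : m 0 = 0) :
    (m.sum fun i e => e * i) = (m.sum fun _ e => e) + (m.sum fun i e => e * (i - 1)) := by
  rw [Finsupp.sum, Finsupp.sum, Finsupp.sum, ← Finset.sum_add_distrib]
  refine Finset.sum_congr rfl fun i hi => ?_
  have hi0 : i ≠ 0 := by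
    rintro rfl
    exact Finsupp.mem_support_iff.mp hi h0
  obtain ⟨j, rfl⟩ := Nat.exists_eq_succ_of_ne_zero hi0
  simp [Nat.mul_succ, Nat.succ_sub_one, add_comm]

/-- The condition in `tauInt` in terms of the weighted degree. -/
lemma tau_cond (n : ℕ) (hn : 3 ≤ n) (m : ℕ →₀ ℕ) (h0 : m 0 = 0) :
    ((Multiset.replicate n 0 + Finsupp.toMultiset m).sum + 3 =
        Multiset.card (Multiset.replicate n 0 + Finsupp.toMultiset m))
      ↔ (m.sum fun i e => e * (i - 1)) = n - 3 := by
  rw [Multiset.sum_add, Multiset.sum_replicate, Multiset.card_add, Multiset.card_replicate,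
    Finsupp.card_toMultiset, sum_toMultiset, sum_split m h0, smul_zero]
  have : (m.sum fun _ => id) = m.sum fun _ e => e := rfl
  rw [this]
  constructor <;> intro h <;> omega

/-- weighted degree ignores the variable `t_1`. -/
lemma w_erase (m : ℕ →₀ ℕ) :
    ((m.erase 1).sum fun i e => e * (i - 1)) = m.sum fun i e => e * (i - 1) := by
  have := Finsupp.add_sum_erase' m 1 (fun i e => e * (i - 1)) (fun _ => zero_mul _)
  simpa using this

end Stmt11Aux

open Finset Stmt11Aux in
/-- For `n ≥ 3`, `F_n = ⟨⟨1,…,1⟩⟩_{0,n}|_{t_0=0}` lies in the subring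
`ℂ[1/(1−t_1)][t_2,…,t_{n−2}]`, and is homogeneous of degree `n−3` for the
grading over `ℂ(t_1)` with `deg(t_i) = i−1` for `i ≥ 2`. -/
theorem stmt_11 (n : ℕ) (hn : 3 ≤ n) :
    setT0 (corr (Multiset.replicate n 0)) ∈
      Algebra.adjoin ℂ
        ({geom} ∪ {F : MvPowerSeries ℕ ℂ | ∃ i, 2 ≤ i ∧ i ≤ n - 2 ∧ F = MvPowerSeries.X i}) ∧
    ∀ m : ℕ →₀ ℕ,
      MvPowerSeries.coeff m (setT0 (corr (Multiset.replicate n 0))) ≠ 0 →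
      (m.sum fun i e => e * (i - 1)) = n - 3 := by
  classical
  set K : (ℕ →₀ ℕ) → ℕ := fun f => f.sum fun _ e => e with hK_def
  set N : (ℕ →₀ ℕ) → ℕ := fun f => n - 3 + K f with hN_def
  set c : (ℕ →₀ ℕ) → ℂ := fun f =>
    (Nat.factorial (N f) : ℂ) /
      (f.prod fun i e => ((Nat.factorial i : ℂ)) ^ e * (Nat.factorial e : ℂ)) with hc_def
  set D : ℕ →₀ ℕ := ∑ i ∈ Finset.Icc 2 (n - 2), Finsupp.single i (n - 3) with hD_def
  set S : Finset (ℕ →₀ ℕ) :=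
    (Finset.Iic D).filter fun f => f.support ⊆ Finset.Icc 2 (n - 2) ∧
      (f.sum fun i e => e * (i - 1)) = n - 3 with hS_def
  set T : (ℕ →₀ ℕ) → MvPowerSeries ℕ ℂ := fun f =>
    c f • (geom ^ (N f + 1) * MvPowerSeries.monomial f 1) with hT_def
  -- the coefficient of T f
  have coeff_T : ∀ f m, MvPowerSeries.coeff m (T f) =
      c f * (if f ≤ m ∧ (m - f).support ⊆ {1}
        then ((((m - f) 1 + N f).choose (N f) : ℕ) : ℂ) else 0) := by
    intro f m
    simp only [hT_def, map_smul, smul_eq_mul]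
    congr 1
    rw [MvPowerSeries.coeff_mul_monomial, coeff_geom_pow]
    by_cases h1 : f ≤ m
    · by_cases h2 : (m - f).support ⊆ {1}
      · rw [if_pos h1, if_pos h2, if_pos ⟨h1, h2⟩, mul_one]
      · rw [if_pos h1, if_neg h2, if_neg (fun h => h2 h.2), zero_mul]
    · rw [if_neg h1, if_neg (fun h => h1 h.1)]
  have hS_supp : ∀ f ∈ S, f.support ⊆ Finset.Icc 2 (n - 2) ∧
      (f.sum fun i e => e * (i - 1)) = n - 3 := by
    intro f hf
    exact (Finset.mem_filter.mp hf).2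
  -- main key identity
  have key : setT0 (corr (Multiset.replicate n 0)) = ∑ f ∈ S, T f := by
    apply MvPowerSeries.ext
    intro m
    rw [map_sum]
    show (if m 0 = 0 then corr (Multiset.replicate n 0) m else 0)
      = ∑ f ∈ S, MvPowerSeries.coeff m (T f)
    have hterm_eq : ∀ f ∈ S, (f ≤ m ∧ (m - f).support ⊆ {1}) → m 0 = 0 → f = m.erase 1 := by
      intro f hf ⟨hle, hsupp⟩ h0
      obtain ⟨hfs, hfw⟩ := hS_supp f hf
      have hf1 : f 1 = 0 := by
        by_contra h
        have := hfs (Finsupp.mem_support_iff.mpr h)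
        rw [Finset.mem_Icc] at this
        omega
      have hfi : ∀ i, i ≠ 1 → f i = m i := by
        intro i hi
        have : (m - f) i = 0 := by
          by_contra h
          exact hi (Finset.mem_singleton.mp (hsupp (Finsupp.mem_support_iff.mpr h)))
        rw [Finsupp.tsub_apply] at this
        have := Finsupp.le_def.mp hle i
        omega
      ext i
      by_cases hi : i = 1
      · subst hi; rw [Finsupp.erase_same, hf1]
      · rw [Finsupp.erase_ne hi, hfi i hi]
    by_cases h0 : m 0 = 0
    · rw [if_pos h0]
      by_cases hwm : (m.sum fun i e => e * (i - 1)) = n - 3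
      · -- the only contributing term is f0 = erase 1 m
        set f0 : ℕ →₀ ℕ := m.erase 1 with hf0_def
        have hf0w : (f0.sum fun i e => e * (i - 1)) = n - 3 := by
          rw [hf0_def, w_erase]; exact hwm
        have hf0supp : f0.support ⊆ Finset.Icc 2 (n - 2) := by
          intro i hi
          rw [hf0_def, Finsupp.support_erase] at hi
          have hi1 : i ≠ 1 := Finset.ne_of_mem_erase hi
          have him : i ∈ m.support := Finset.mem_of_mem_erase hi
          have hi0 : i ≠ 0 := by
            rintro rfl
            exact Finsupp.mem_support_iff.mp him h0
          have hle : m i * (i - 1) ≤ m.sum fun i e => e * (i - 1) :=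
            Finset.single_le_sum (f := fun j => m j * (j - 1))
              (fun _ _ => Nat.zero_le _) him
          rw [hwm] at hle
          have hmi : m i ≠ 0 := Finsupp.mem_support_iff.mp him
          have h1m : 1 ≤ m i := Nat.one_le_iff_ne_zero.mpr hmi
          have h2 : i - 1 ≤ m i * (i - 1) := by
            calc i - 1 = 1 * (i - 1) := (one_mul _).symm
            _ ≤ m i * (i - 1) := Nat.mul_le_mul_right _ h1m
          rw [Finset.mem_Icc]
          omega
        have hf0D : f0 ≤ D := by
          rw [Finsupp.le_def]
          intro i
          by_cases hi : f0 i = 0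
          · simp [hi]
          · have his : i ∈ f0.support := Finsupp.mem_support_iff.mpr hi
            have hiIcc := hf0supp his
            have hDi : D i = n - 3 := by
              rw [hD_def, Finset.sum_apply']
              rw [Finset.sum_eq_single i (fun j _ hj => Finsupp.single_eq_of_ne' hj)
                (fun h => absurd hiIcc h)]
              exact Finsupp.single_eq_same
            rw [hDi]
            have hle : f0 i * (i - 1) ≤ f0.sum fun i e => e * (i - 1) :=
              Finset.single_le_sum (f := fun j => f0 j * (j - 1))
                (fun _ _ => Nat.zero_le _) his
            rw [hf0w] at hle
            have h2i : 2 ≤ i := (Finset.mem_Icc.mp hiIcc).1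
            have h3 : f0 i ≤ f0 i * (i - 1) := by
              calc f0 i = f0 i * 1 := (mul_one _).symm
              _ ≤ f0 i * (i - 1) := Nat.mul_le_mul_left _ (by omega)
            omega
        have hf0S : f0 ∈ S := Finset.mem_filter.mpr ⟨Finset.mem_Iic.mpr hf0D, hf0supp, hf0w⟩
        rw [Finset.sum_eq_single_of_mem f0 hf0S]
        · -- main computation
          rw [coeff_T]
          have hle : f0 ≤ m := by
            rw [Finsupp.le_def]
            intro i
            by_cases hi : i = 1
            · subst hi; simp [hf0_def, Finsupp.erase_same]
            · simp [hf0_def, Finsupp.erase_ne hi]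
          have hsub : m - f0 = Finsupp.single 1 (m 1) := by
            ext i
            rw [Finsupp.tsub_apply]
            by_cases hi : i = 1
            · subst hi
              rw [hf0_def, Finsupp.erase_same, Finsupp.single_eq_same]
              omega
            · rw [hf0_def, Finsupp.erase_ne hi, Finsupp.single_eq_of_ne' (Ne.symm hi)]
              omega
          rw [if_pos ⟨hle, by rw [hsub]; exact Finsupp.support_single_subset⟩]
          rw [hsub, Finsupp.single_eq_same]
          -- now unfold the left side
          show tauInt (Multiset.replicate n 0 + Finsupp.toMultiset m) /
              (m.prod fun _ e => (Nat.factorial e : ℂ)) = _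
          have hcond := (tau_cond n hn m h0).mpr hwm
          rw [tauInt, if_pos hcond]
          -- the multiset product
          have hmap : ((Multiset.replicate n 0 + Finsupp.toMultiset m).map
              fun i => (Nat.factorial i : ℂ)).prod
              = m.prod fun i e => ((Nat.factorial i : ℂ)) ^ e := by
            have h1 : ((Finsupp.toMultiset m).map fun i => (Nat.factorial i : ℂ)).prod
                = m.prod fun i e => ((Nat.factorial i : ℂ)) ^ e := by
              rw [Finsupp.toMultiset_map, Finsupp.prod_toMultiset]
              exact Finsupp.prod_mapDomain_index (by simp) (by intros; rw [pow_add])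
            rw [Multiset.map_add, Multiset.prod_add, Multiset.map_replicate,
              Multiset.prod_replicate, h1]
            simp [Nat.factorial]
          rw [hmap]
          have hcard : Multiset.card (Multiset.replicate n 0 + Finsupp.toMultiset m)
              = n + K m := by
            rw [Multiset.card_add, Multiset.card_replicate, Finsupp.card_toMultiset]; rfl
          rw [hcard]
          -- split the sums/products at the variable 1
          have hK : K m = m 1 + K f0 := by
            simp only [hK_def, hf0_def]
            exact (Finsupp.add_sum_erase' m 1 (fun _ e => e) (fun _ => rfl)).symm
          have hP : (m.prod fun i e => ((Nat.factorial i : ℂ)) ^ e)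
              = f0.prod fun i e => ((Nat.factorial i : ℂ)) ^ e := by
            rw [hf0_def, ← Finsupp.mul_prod_erase' m 1 _ (fun _ => pow_zero _)]
            simp [Nat.factorial]
          have hQ : (m.prod fun _ e => (Nat.factorial e : ℂ))
              = (Nat.factorial (m 1) : ℂ) * f0.prod fun _ e => (Nat.factorial e : ℂ) := by
            rw [hf0_def, ← Finsupp.mul_prod_erase' m 1 _ (fun _ => by simp [Nat.factorial])]
          have hPQ : (f0.prod fun i e => ((Nat.factorial i : ℂ)) ^ e * (Nat.factorial e : ℂ))
              = (f0.prod fun i e => ((Nat.factorial i : ℂ)) ^ e)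
                * f0.prod fun _ e => (Nat.factorial e : ℂ) := by
            rw [Finsupp.prod, Finsupp.prod, Finsupp.prod, ← Finset.prod_mul_distrib]
          rw [hP, hQ]
          have hNle : N f0 ≤ m 1 + N f0 := Nat.le_add_left _ _
          have hchoose : (((m 1 + N f0).choose (N f0) : ℕ) : ℂ)
              = (Nat.factorial (m 1 + N f0) : ℂ) /
                ((Nat.factorial (N f0) : ℂ) * (Nat.factorial (m 1) : ℂ)) := by
            rw [Nat.cast_choose ℂ hNle, Nat.add_sub_cancel]
          have hNN : n + K m - 3 = m 1 + N f0 := by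
            rw [hK]
            simp only [hN_def]
            omega
          rw [hNN]
          simp only [hc_def]
          rw [hPQ, hchoose]
          have hPne : (f0.prod fun i e => ((Nat.factorial i : ℂ)) ^ e) ≠ 0 := by
            rw [Finsupp.prod, Finset.prod_ne_zero_iff]
            intro i _
            exact pow_ne_zero _ (Nat.cast_ne_zero.mpr (Nat.factorial_ne_zero i))
          have hQne : (f0.prod fun _ e => (Nat.factorial e : ℂ)) ≠ 0 := by
            rw [Finsupp.prod, Finset.prod_ne_zero_iff]
            intro i _
            exact Nat.cast_ne_zero.mpr (Nat.factorial_ne_zero _)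
          have h1ne : (Nat.factorial (m 1) : ℂ) ≠ 0 :=
            Nat.cast_ne_zero.mpr (Nat.factorial_ne_zero _)
          have h2ne : (Nat.factorial (N f0) : ℂ) ≠ 0 :=
            Nat.cast_ne_zero.mpr (Nat.factorial_ne_zero _)
          field_simp
        · -- other terms vanish
          intro f hf hne
          rw [coeff_T]
          by_cases hcond : f ≤ m ∧ (m - f).support ⊆ {1}
          · exact absurd (hterm_eq f hf hcond h0) (by rw [← hf0_def] at *; exact hne)
          · rw [if_neg hcond, mul_zero]
      · -- w m ≠ n - 3 : both sides vanish
        have hLHS : corr (Multiset.replicate n 0) m = 0 := by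
          show tauInt (Multiset.replicate n 0 + Finsupp.toMultiset m) / _ = 0
          rw [tauInt, if_neg (fun h => hwm ((tau_cond n hn m h0).mp h)), zero_div]
        rw [hLHS]
        symm
        apply Finset.sum_eq_zero
        intro f hf
        rw [coeff_T]
        by_cases hcond : f ≤ m ∧ (m - f).support ⊆ {1}
        · exfalso
          apply hwm
          have h2 := (hS_supp f hf).2
          rw [hterm_eq f hf hcond h0] at h2
          rw [← w_erase m]
          exact h2
        · rw [if_neg hcond, mul_zero]
    · -- m 0 ≠ 0 : both sides vanish
      rw [if_neg h0]
      symm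
      apply Finset.sum_eq_zero
      intro f hf
      rw [coeff_T]
      by_cases hcond : f ≤ m ∧ (m - f).support ⊆ {1}
      · exfalso
        obtain ⟨hle, hsupp⟩ := hcond
        have hf0 : f 0 = 0 := by
          by_contra h
          have := (hS_supp f hf).1 (Finsupp.mem_support_iff.mpr h)
          rw [Finset.mem_Icc] at this
          omega
        have hne0 : (m - f) 0 ≠ 0 := by
          rw [Finsupp.tsub_apply, hf0]
          omega
        have h01 : (0 : ℕ) ∈ ({1} : Finset ℕ) := hsupp (Finsupp.mem_support_iff.mpr hne0)
        simp at h01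
      · rw [if_neg hcond, mul_zero]
  constructor
  · -- membership
    rw [key]
    apply Subalgebra.sum_mem
    intro f hf
    simp only [hT_def]
    apply Subalgebra.smul_mem
    refine Subalgebra.mul_mem _ ?_ ?_
    · apply Subalgebra.pow_mem
      apply Algebra.subset_adjoin
      left
      rfl
    · obtain ⟨hfs, _⟩ := hS_supp f hf
      rw [monomial_eq_prod _ f hfs]
      apply Subalgebra.prod_mem
      intro i hi
      refine Subalgebra.pow_mem _ ?_ _
      apply Algebra.subset_adjoin (R := ℂ)
      right
      rw [Finset.mem_Icc] at hi
      exact ⟨i, hi.1, hi.2, rfl⟩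
  · -- homogeneity
    intro m hm
    have h0 : m 0 = 0 := by
      by_contra h
      apply hm
      show (if m 0 = 0 then corr (Multiset.replicate n 0) m else 0) = 0
      rw [if_neg h]
    have hco : corr (Multiset.replicate n 0) m ≠ 0 := by
      intro h
      apply hm
      show (if m 0 = 0 then corr (Multiset.replicate n 0) m else 0) = 0
      rw [if_pos h0, h]
    have htau : tauInt (Multiset.replicate n 0 + Finsupp.toMultiset m) ≠ 0 := by
      intro h
      apply hco
      show tauInt (Multiset.replicate n 0 + Finsupp.toMultiset m) / _ = 0
      rw [h, zero_div]
    by_cases hcond : (Multiset.replicate n 0 + Finsupp.toMultiset m).sum + 3 =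
        Multiset.card (Multiset.replicate n 0 + Finsupp.toMultiset m)
    · exact (tau_cond n hn m h0).mp hcond
    · exfalso
      apply htau
      rw [tauInt, if_neg hcond]
end

section
/- The set of genus 0 correlators { F_n := ⟨⟨1,…,1⟩⟩_{0,n}|_{t_0=0} }_{n≥4} freely generates the ring C(t_1)[t_2,t_3,…] over C(t_1): the C(t_1)-algebra homomorphism from the polynomial ring C(t_1)[Y_4, Y_5, Y_6, …] (one variable Y_n for each n ≥ 4) to C(t_1)[t_2,t_3,…] determined by Y_n ↦ F_n is an isomorphism. -/
open Finsupp MvPolynomial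

abbrev Idx := {i : ℕ // 2 ≤ i}

/-- weight -/
def wt (ν : Idx →₀ ℕ) : ℕ := ν.sum fun i e => (i.1 - 1) * e
def Dd (ν : Idx →₀ ℕ) : ℕ := ν.sum fun i e => i.1 * e

noncomputable def cC (ν : Idx →₀ ℕ) : ℂ :=
  (Nat.factorial (Dd ν) : ℂ) /
    ((ν.prod fun i e => (Nat.factorial i.1 : ℂ) ^ e) * (ν.prod fun _ e => (Nat.factorial e : ℂ)))

noncomputable def rr (ν : Idx →₀ ℕ) : RatFunc ℂ :=
  RatFunc.C (cC ν) / (1 - RatFunc.X) ^ (Dd ν + 1)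

lemma Dd_eq (ν : Idx →₀ ℕ) : Dd ν = wt ν + ν.sum fun _ e => e := by
  rw [wt, Dd, ← Finsupp.sum_add]
  apply Finsupp.sum_congr
  intro i _
  have h1 : 1 ≤ i.1 := le_trans one_le_two i.2
  rw [Nat.sub_one_mul, Nat.sub_add_cancel (Nat.le_mul_of_pos_left _ h1)]

noncomputable def Bb (d : ℕ) : Idx →₀ ℕ :=
  Finsupp.onFinset ((Finset.Icc 2 (d+1)).subtype (2 ≤ ·))
    (fun i => if i.1 ≤ d + 1 then d else 0)
    (by intro i hi
        have hle : i.1 ≤ d + 1 := by by_contra h; rw [if_neg h] at hi; exact hi rfl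
        simp only [Finset.mem_subtype, Finset.mem_Icc]
        exact ⟨i.2, hle⟩)

lemma le_Bb {ν : Idx →₀ ℕ} {d : ℕ} (h : wt ν = d) : ν ≤ Bb d := by
  intro i
  by_cases hi : ν i = 0
  · simp [hi]
  · have hmem : i ∈ ν.support := Finsupp.mem_support_iff.mpr hi
    have hle : (i.1 - 1) * ν i ≤ wt ν := by
      rw [wt, Finsupp.sum]
      exact Finset.single_le_sum (f := fun j => (j.1 - 1) * ν j) (fun j _ => Nat.zero_le _) hmem
    have h2 : 2 ≤ i.1 := i.2
    have h1 : 0 < ν i := Nat.pos_of_ne_zero hi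
    rw [h] at hle
    have ha : i.1 - 1 ≤ d := le_trans (Nat.le_mul_of_pos_right _ h1) hle
    have hvd : ν i ≤ d := le_trans (le_trans (le_of_eq (one_mul _).symm)
      (Nat.mul_le_mul_right _ (by omega))) hle
    have hi1 : i.1 ≤ d + 1 := by omega
    show ν i ≤ Bb d i
    simp only [Bb, Finsupp.onFinset_apply]
    rw [if_pos hi1]
    exact hvd

noncomputable def SS (d : ℕ) : Finset (Idx →₀ ℕ) :=
  (Finset.Iic (Bb d)).filter (fun ν => wt ν = d)

lemma mem_SS {ν : Idx →₀ ℕ} {d : ℕ} : ν ∈ SS d ↔ wt ν = d := by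
  constructor
  · intro h; exact (Finset.mem_filter.mp h).2
  · intro h; exact Finset.mem_filter.mpr ⟨Finset.mem_Iic.mpr (le_Bb h), h⟩

noncomputable def Gg (n : ℕ) : MvPolynomial Idx (RatFunc ℂ) :=
  ∑ ν ∈ SS (n - 3), monomial ν (rr ν)

lemma coeff_Gg (n : ℕ) (ν : Idx →₀ ℕ) :
    MvPolynomial.coeff ν (Gg n) = if wt ν = n - 3 then rr ν else 0 := by
  rw [Gg]
  rw [MvPolynomial.coeff_sum]
  simp only [MvPolynomial.coeff_monomial]
  rw [Finset.sum_ite_eq' (SS (n-3)) ν rr]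
  simp [mem_SS]

lemma mprod {M : Type*} [CommMonoid M] (m : ℕ →₀ ℕ) (g : ℕ → M) :
    ((Finsupp.toMultiset m).map g).prod = m.prod fun i e => g i ^ e := by
  induction m using Finsupp.induction with
  | zero => simp
  | single_add a n f ha hn ih =>
    rw [Finsupp.toMultiset_add, Multiset.map_add, Multiset.prod_add, ih,
      Finsupp.toMultiset_single, Finsupp.prod_add_index' (fun _ => pow_zero _)
        (fun _ _ _ => pow_add _ _ _),
      Finsupp.prod_single_index (h := fun i e => g i ^ e) (pow_zero _)]
    congr 1
    rw [Multiset.map_nsmul, Multiset.prod_nsmul, Multiset.map_singleton,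
      Multiset.prod_singleton]

lemma fact_ne (x : ℕ) : (Nat.factorial x : ℂ) ≠ 0 :=
  Nat.cast_ne_zero.mpr (Nat.factorial_ne_zero x)

lemma P1_ne (ν : Idx →₀ ℕ) : (ν.prod fun i e => (Nat.factorial i.1 : ℂ) ^ e) ≠ 0 :=
  Finset.prod_ne_zero_iff.mpr fun i _ => pow_ne_zero _ (fact_ne _)

lemma P2_ne (ν : Idx →₀ ℕ) : (ν.prod fun _ e => (Nat.factorial e : ℂ)) ≠ 0 :=
  Finset.prod_ne_zero_iff.mpr fun i _ => fact_ne _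

lemma cC_ne (ν : Idx →₀ ℕ) : cC ν ≠ 0 := by
  rw [cC]
  exact div_ne_zero (fact_ne _) (mul_ne_zero (P1_ne ν) (P2_ne ν))

lemma one_sub_X_ne : (1 - RatFunc.X : RatFunc ℂ) ≠ 0 := by
  have h : ((1 : Polynomial ℂ) - Polynomial.X) ≠ 0 := by
    intro h
    have := congrArg (fun p => Polynomial.coeff p 1) h
    simp only [Polynomial.coeff_sub, Polynomial.coeff_X_one, Polynomial.coeff_zero,
      Polynomial.coeff_one] at this
    norm_num at this
  have h2 : algebraMap (Polynomial ℂ) (RatFunc ℂ) ((1 : Polynomial ℂ) - Polynomial.X) ≠ 0 :=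
    (map_ne_zero_iff _ (RatFunc.algebraMap_injective ℂ)).mpr h
  simpa [map_sub, RatFunc.algebraMap_X] using h2

lemma rr_ne (ν : Idx →₀ ℕ) : rr ν ≠ 0 := by
  rw [rr]
  apply div_ne_zero
  · intro h
    exact cC_ne ν ((RingHom.injective (RatFunc.C : ℂ →+* RatFunc ℂ)) (by rw [h, map_zero]))
  · exact pow_ne_zero _ one_sub_X_ne

lemma coeff_corr {n : ℕ} (hn : 4 ≤ n) (ν : Idx →₀ ℕ) (a : ℕ) :
    MvPowerSeries.coeff
        (Finsupp.embDomain (Function.Embedding.subtype fun i => 2 ≤ i) ν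
          + Finsupp.single 1 a)
        (setT0 (corr (Multiset.replicate n 0)))
    = if wt ν = n - 3 then cC ν * ((Dd ν + a).choose (Dd ν) : ℂ) else 0 := by
  set f : Idx ↪ ℕ := Function.Embedding.subtype fun i => 2 ≤ i with hf
  set m : ℕ →₀ ℕ := Finsupp.embDomain f ν + Finsupp.single 1 a with hm
  have hm0 : m 0 = 0 := by
    rw [hm, Finsupp.add_apply, Finsupp.embDomain_notin_range, Finsupp.single_eq_of_ne (by norm_num)]
    · rfl
    · rintro ⟨⟨i, hi⟩, h0⟩
      simp [hf] at h0
      omega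
  have hcoeff : MvPowerSeries.coeff m (setT0 (corr (Multiset.replicate n 0)))
      = corr (Multiset.replicate n 0) m := by
    rw [MvPowerSeries.coeff_apply, setT0, if_pos hm0]
  rw [hcoeff, corr]
  have hdisj : Disjoint (Finsupp.embDomain f ν).support (Finsupp.single 1 a).support := by
    rw [Finset.disjoint_left]
    intro x hx hx'
    rw [Finsupp.support_embDomain, Finset.mem_map] at hx
    obtain ⟨i, _, rfl⟩ := hx
    have := Finsupp.support_single_subset hx'
    simp [hf] at this
    have := i.2
    omega
  -- sums
  have hS : (m.sum fun _ e => e) = (ν.sum fun _ e => e) + a := by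
    rw [hm, Finsupp.sum_add_index' (fun _ => rfl) (fun _ _ _ => rfl),
      Finsupp.sum_embDomain, Finsupp.sum_single_index rfl]
  have hW : (m.sum fun i e => e * i) = Dd ν + a := by
    rw [hm, Finsupp.sum_add_index' (fun i => zero_mul i) (fun i b c => add_mul b c i),
      Finsupp.sum_embDomain, Finsupp.sum_single_index (zero_mul 1)]
    simp only [hf, Function.Embedding.coe_subtype, mul_one]
    rw [Dd]
    congr 1
    exact Finsupp.sum_congr fun i _ => mul_comm _ _
  have hcard : Multiset.card (Multiset.replicate n 0 + Finsupp.toMultiset m)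
      = n + ((ν.sum fun _ e => e) + a) := by
    rw [Multiset.card_add, Multiset.card_replicate, Finsupp.card_toMultiset, ← hS]
    rfl
  have hsum : (Multiset.replicate n 0 + Finsupp.toMultiset m).sum = Dd ν + a := by
    rw [Multiset.sum_add, Multiset.sum_replicate, smul_zero, zero_add,
      Finsupp.sum_toMultiset, ← hW]
    exact Finsupp.sum_congr fun i _ => rfl
  have hDd : Dd ν = wt ν + ν.sum fun _ e => e := Dd_eq ν
  by_cases hw : wt ν = n - 3
  · rw [if_pos hw]
    have hcond : (Multiset.replicate n 0 + Finsupp.toMultiset m).sum + 3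
        = Multiset.card (Multiset.replicate n 0 + Finsupp.toMultiset m) := by
      rw [hsum, hcard]; omega
    rw [tauInt, if_pos hcond, hcard]
    -- factorial products
    have hfp : ((Multiset.replicate n 0 + Finsupp.toMultiset m).map
          fun i => (Nat.factorial i : ℂ)).prod
        = ν.prod fun i e => (Nat.factorial i.1 : ℂ) ^ e := by
      rw [Multiset.map_add, Multiset.prod_add, Multiset.map_replicate,
        Multiset.prod_replicate, mprod]
      rw [hm, Finsupp.prod_add_index' (fun _ => pow_zero _) (fun _ _ _ => pow_add _ _ _),
        Finsupp.prod_embDomain,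
        Finsupp.prod_single_index (h := fun i e => (Nat.factorial i : ℂ) ^ e) (pow_zero _)]
      simp only [hf, Function.Embedding.coe_subtype, Nat.factorial_zero, Nat.factorial_one,
        Nat.cast_one, one_pow, mul_one, one_mul]
    have hep : (m.prod fun _ e => (Nat.factorial e : ℂ))
        = (ν.prod fun _ e => (Nat.factorial e : ℂ)) * Nat.factorial a := by
      rw [hm, Finsupp.prod_add_index_of_disjoint hdisj,
        Finsupp.prod_embDomain,
        Finsupp.prod_single_index (h := fun _ e => (Nat.factorial e : ℂ)) (by simp)]
    rw [hfp, hep]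
    have hnum : n + ((ν.sum fun _ e => e) + a) - 3 = Dd ν + a := by omega
    rw [hnum, cC, Nat.cast_choose ℂ (Nat.le_add_right _ _), Nat.add_sub_cancel_left]
    have h1 := P1_ne ν
    have h2 := P2_ne ν
    have h3 := fact_ne (Dd ν)
    have h4 := fact_ne a
    field_simp
  · rw [if_neg hw, tauInt, if_neg, zero_div]
    rw [hsum, hcard]
    omega

open PowerSeries HahnSeries in
lemma hahn_eq {n : ℕ} (hn : 4 ≤ n) (ν : Idx →₀ ℕ) :
    @algebraMap (RatFunc ℂ) (LaurentSeries ℂ) _ _ (RatFunc.liftAlgebra ℂ (LaurentSeries ℂ)) (MvPolynomial.coeff ν (Gg n)) =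
      HahnSeries.ofPowerSeries ℤ ℂ (PowerSeries.mk fun a =>
        MvPowerSeries.coeff
          (Finsupp.embDomain (Function.Embedding.subtype fun i => 2 ≤ i) ν
            + Finsupp.single 1 a)
          (setT0 (corr (Multiset.replicate n 0)))) := by
  rw [coeff_Gg]
  by_cases hw : wt ν = n - 3
  · rw [if_pos hw]
    have hser : (PowerSeries.mk fun a =>
        MvPowerSeries.coeff
          (Finsupp.embDomain (Function.Embedding.subtype fun i => 2 ≤ i) ν
            + Finsupp.single 1 a)
          (setT0 (corr (Multiset.replicate n 0))))
        = PowerSeries.C (cC ν) * (PowerSeries.invOneSubPow ℂ (Dd ν + 1)).val := by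
      rw [PowerSeries.invOneSubPow_val_succ_eq_mk_add_choose]
      ext b
      rw [PowerSeries.coeff_mk, coeff_corr hn, if_pos hw, PowerSeries.coeff_C_mul,
        PowerSeries.coeff_mk]
    rw [hser, rr]
    have hden : ((1 : ℂ⟦X⟧) - PowerSeries.X) ≠ 0 := by
      intro h
      have := congrArg (PowerSeries.constantCoeff) h
      simp at this
    have hdenH : ((HahnSeries.ofPowerSeries ℤ ℂ) ((1 - PowerSeries.X : ℂ⟦X⟧) ^ (Dd ν + 1))) ≠ 0 := by
      intro h
      exact pow_ne_zero _ hden (HahnSeries.ofPowerSeries_injective (by rw [h, map_zero]))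
    rw [map_div₀, map_pow, map_sub, map_one]
    have hX : @algebraMap (RatFunc ℂ) (LaurentSeries ℂ) _ _ (RatFunc.liftAlgebra ℂ (LaurentSeries ℂ)) RatFunc.X = (HahnSeries.ofPowerSeries ℤ ℂ) PowerSeries.X := by
      rw [RatFunc.coe_X, HahnSeries.ofPowerSeries_X]
    have hC : @algebraMap (RatFunc ℂ) (LaurentSeries ℂ) _ _ (RatFunc.liftAlgebra ℂ (LaurentSeries ℂ)) (RatFunc.C (cC ν)) = HahnSeries.C (cC ν) := by
      rw [← RatFunc.algebraMap_C, ← IsScalarTower.algebraMap_apply]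
      rw [Polynomial.algebraMap_hahnSeries_apply]
      simp
    rw [hX, hC, ← map_one (HahnSeries.ofPowerSeries ℤ ℂ), ← map_sub, ← map_pow]
    rw [div_eq_iff hdenH, ← map_mul, mul_assoc, ← PowerSeries.invOneSubPow_inv_eq_one_sub_pow,
      (PowerSeries.invOneSubPow ℂ (Dd ν + 1)).val_inv, mul_one, HahnSeries.ofPowerSeries_C]
  · rw [if_neg hw, map_zero]
    have hser : (PowerSeries.mk fun a =>
        MvPowerSeries.coeff
          (Finsupp.embDomain (Function.Embedding.subtype fun i => 2 ≤ i) ν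
            + Finsupp.single 1 a)
          (setT0 (corr (Multiset.replicate n 0)))) = 0 := by
      ext b
      rw [PowerSeries.coeff_mk, coeff_corr hn, if_neg hw, map_zero]
    rw [hser, map_zero]

abbrev Jdx := {n : ℕ // 4 ≤ n}
noncomputable abbrev AP := MvPolynomial Idx (RatFunc ℂ)
noncomputable abbrev PP := MvPolynomial Jdx (RatFunc ℂ)

noncomputable def σi (i : Idx) : Idx →₀ ℕ := Finsupp.single i 1

lemma wt_σi (i : Idx) : wt (σi i) = i.1 - 1 := by
  rw [σi, wt, Finsupp.sum_single_index (by simp)]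
  exact mul_one _

noncomputable def Ll (i : Idx) : AP :=
  ∑ ν ∈ (SS (i.1 - 1)).erase (σi i), monomial ν (rr ν)

lemma σi_mem (i : Idx) : σi i ∈ SS (i.1 - 1) := mem_SS.mpr (wt_σi i)

lemma Gg_split (i : Idx) : Gg (i.1 + 2) = monomial (σi i) (rr (σi i)) + Ll i := by
  rw [Gg, Ll]
  have h3 : i.1 + 2 - 3 = i.1 - 1 := by omega
  rw [h3, ← Finset.add_sum_erase _ _ (σi_mem i)]

lemma small_vars {i : Idx} {ν : Idx →₀ ℕ} (hν : ν ∈ (SS (i.1 - 1)).erase (σi i))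
    {j : Idx} (hj : j ∈ ν.support) : j.1 < i.1 := by
  have hne : ν ≠ σi i := (Finset.mem_erase.mp hν).1
  have hw : wt ν = i.1 - 1 := mem_SS.mp (Finset.mem_erase.mp hν).2
  have hj0 : ν j ≠ 0 := Finsupp.mem_support_iff.mp hj
  have hj1 : 1 ≤ ν j := Nat.one_le_iff_ne_zero.mpr hj0
  have hle : (j.1 - 1) * ν j ≤ i.1 - 1 := by
    rw [← hw, wt, Finsupp.sum]
    exact Finset.single_le_sum (f := fun k => (k.1 - 1) * ν k) (fun k _ => Nat.zero_le _) hj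
  have hj2 : 2 ≤ j.1 := j.2
  have hi2 : 2 ≤ i.1 := i.2
  by_contra hge
  push_neg at hge
  have hji : j = i := by
    apply Subtype.ext
    have : j.1 - 1 ≤ (j.1 - 1) * ν j := Nat.le_mul_of_pos_right _ (Nat.pos_of_ne_zero hj0)
    omega
  subst hji
  have hν1 : ν j = 1 := by
    have : (j.1 - 1) * ν j ≤ (j.1 - 1) * 1 := by omega
    have := Nat.le_of_mul_le_mul_left (by omega : (j.1 - 1) * ν j ≤ (j.1 - 1) * 1) (by omega)
    omega
  -- the rest of the support must vanish
  have hsplit : wt ν = (j.1 - 1) * ν j + ∑ k ∈ ν.support.erase j, (k.1 - 1) * ν k := by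
    rw [wt, Finsupp.sum, ← Finset.add_sum_erase _ _ hj]
  have hrest : ∑ k ∈ ν.support.erase j, (k.1 - 1) * ν k = 0 := by
    rw [hν1, mul_one] at hsplit
    omega
  have hsupp : ν.support ⊆ {j} := by
    intro k hk
    have hk' : k ∈ insert j (ν.support.erase j) := by rw [Finset.insert_erase hj]; exact hk
    rcases Finset.mem_insert.mp hk' with h | h
    · simp [h]
    · exfalso
      have hz := (Finset.sum_eq_zero_iff.mp hrest) k h
      have hk2 : 2 ≤ k.1 := k.2
      have : ν k ≠ 0 := Finsupp.mem_support_iff.mp (Finset.mem_of_mem_erase h)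
      have : ν k = 0 := by
        rcases Nat.mul_eq_zero.mp hz with h' | h'
        · omega
        · exact h'
      omega
  exact hne (by
    have h := Finsupp.support_subset_singleton.mp hsupp
    rw [h, hν1, σi])

noncomputable def Kk : ℕ → PP
  | i =>
    (rr (σi ⟨i + 2, by omega⟩))⁻¹ •
      (MvPolynomial.X (⟨i + 4, by omega⟩ : Jdx) -
        MvPolynomial.aeval
          (fun j : Idx => if h : j.1 - 2 < i then Kk (j.1 - 2) else 0)
          (Ll ⟨i + 2, by omega⟩))
termination_by i => i
decreasing_by exact h

lemma Kk_def (i : ℕ) : Kk i =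
    (rr (σi ⟨i + 2, by omega⟩))⁻¹ •
      (MvPolynomial.X (⟨i + 4, by omega⟩ : Jdx) -
        MvPolynomial.aeval
          (fun j : Idx => if h : j.1 - 2 < i then Kk (j.1 - 2) else 0)
          (Ll ⟨i + 2, by omega⟩)) := by
  rw [Kk]

lemma aeval_Ll_congr {B : Type*} [CommSemiring B] [Algebra (RatFunc ℂ) B]
    (g g' : Idx → B) (i : Idx) (h : ∀ j : Idx, j.1 < i.1 → g j = g' j) :
    MvPolynomial.aeval g (Ll i) = MvPolynomial.aeval g' (Ll i) := by
  rw [Ll, map_sum, map_sum]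
  apply Finset.sum_congr rfl
  intro ν hν
  rw [MvPolynomial.aeval_monomial, MvPolynomial.aeval_monomial]
  congr 1
  apply Finsupp.prod_congr
  intro j hj
  rw [h j (small_vars hν hj)]

noncomputable def Φm : PP →ₐ[RatFunc ℂ] AP :=
  MvPolynomial.aeval (fun p : Jdx => Gg p.1)

noncomputable def Ψm : AP →ₐ[RatFunc ℂ] PP :=
  MvPolynomial.aeval (fun j : Idx => Kk (j.1 - 2))

lemma Phi_Kk : ∀ i : ℕ, Φm (Kk i) = MvPolynomial.X (⟨i + 2, by omega⟩ : Idx) := by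
  intro i
  induction i using Nat.strong_induction_on with
  | _ i IH =>
    rw [Kk_def, map_smul, map_sub]
    have hX : Φm (MvPolynomial.X (⟨i + 4, by omega⟩ : Jdx)) = Gg (i + 4) := by
      rw [Φm, MvPolynomial.aeval_X]
    set i' : Idx := ⟨i + 2, by omega⟩ with hi'
    have hsplit : Gg (i + 4) = monomial (σi i') (rr (σi i')) + Ll i' := Gg_split i'
    have hcomp : Φm (MvPolynomial.aeval
        (fun j : Idx => if h : j.1 - 2 < i then Kk (j.1 - 2) else 0) (Ll i'))
        = MvPolynomial.aeval
            (fun j : Idx => Φm (if h : j.1 - 2 < i then Kk (j.1 - 2) else 0)) (Ll i') := by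
      rw [← MvPolynomial.comp_aeval]; rfl
    have hLl : MvPolynomial.aeval
        (fun j : Idx => Φm (if h : j.1 - 2 < i then Kk (j.1 - 2) else 0)) (Ll i') = Ll i' := by
      rw [aeval_Ll_congr _ MvPolynomial.X i' ?_, MvPolynomial.aeval_X_left_apply]
      intro j hj
      have hj2 : 2 ≤ j.1 := j.2
      have hlt : j.1 - 2 < i := by simp only [hi'] at hj; omega
      rw [dif_pos hlt, IH _ hlt]
      congr 1
      exact Subtype.ext (show j.1 - 2 + 2 = j.1 by omega)
    rw [hX, hcomp, hLl, hsplit, add_sub_cancel_right]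
    have hmono : (monomial (σi i') (rr (σi i')) : AP) = rr (σi i') • MvPolynomial.X i' := by
      rw [show (MvPolynomial.X i' : AP) = monomial (σi i') 1 from rfl,
        MvPolynomial.smul_monomial, smul_eq_mul, mul_one]
    rw [hmono, smul_smul, inv_mul_cancel₀ (rr_ne _), one_smul]

lemma Psi_Phi_X (p : Jdx) : Ψm (Φm (MvPolynomial.X p)) = MvPolynomial.X p := by
  have hp4 : 4 ≤ p.1 := p.2
  rw [Φm, MvPolynomial.aeval_X]
  set i' : Idx := ⟨p.1 - 2, by omega⟩ with hi'
  have hG : Gg p.1 = monomial (σi i') (rr (σi i')) + Ll i' := by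
    have : p.1 = i'.1 + 2 := by simp [hi']; omega
    rw [this]; exact Gg_split i'
  have hmono : (monomial (σi i') (rr (σi i')) : AP) = rr (σi i') • MvPolynomial.X i' := by
    rw [show (MvPolynomial.X i' : AP) = monomial (σi i') 1 from rfl,
      MvPolynomial.smul_monomial]
    simp
  rw [hG, hmono, map_add, map_smul]
  have hΨX : Ψm (MvPolynomial.X i') = Kk (p.1 - 4) := by
    rw [Ψm, MvPolynomial.aeval_X]
    congr 1
  rw [hΨX, Kk_def]
  have e1 : (⟨p.1 - 4 + 2, by omega⟩ : Idx) = i' := Subtype.ext (by simp only [hi']; omega)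
  have e2 : (⟨p.1 - 4 + 4, by omega⟩ : Jdx) = p := Subtype.ext (show p.1 - 4 + 4 = p.1 by omega)
  rw [e1, e2]
  have hLl : MvPolynomial.aeval
      (fun j : Idx => if h : j.1 - 2 < p.1 - 4 then Kk (j.1 - 2) else 0) (Ll i') = Ψm (Ll i') := by
    rw [Ψm]
    apply aeval_Ll_congr
    intro j hj
    have hj2 : 2 ≤ j.1 := j.2
    have hlt : j.1 - 2 < p.1 - 4 := by simp only [hi'] at hj; omega
    rw [dif_pos hlt]
  rw [hLl, smul_smul, mul_inv_cancel₀ (rr_ne _), one_smul, sub_add_cancel]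

lemma Phi_Psi_X (j : Idx) : Φm (Ψm (MvPolynomial.X j)) = MvPolynomial.X j := by
  rw [Ψm, MvPolynomial.aeval_X, Phi_Kk]
  congr 1
  exact Subtype.ext (show j.1 - 2 + 2 = j.1 by have := j.2; omega)


/-- The correlators `F_n = ⟨⟨1,…,1⟩⟩_{0,n}|_{t_0=0}` (n ≥ 4) freely generate
`ℂ(t_1)[t_2,t_3,…]` over `ℂ(t_1)`: there are polynomials
`G n ∈ ℂ(t_1)[t_2,t_3,…]` representing the `F_n` (coefficientwise, via Laurent
expansion of rational functions in `t_1`), and the `ℂ(t_1)`-algebra map from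
`ℂ(t_1)[Y_4,Y_5,…]` sending `Y_n ↦ G n` is an isomorphism. -/
theorem stmt_12 :
    ∃ G : ℕ → MvPolynomial {i : ℕ // 2 ≤ i} (RatFunc ℂ),
      (∀ n, 4 ≤ n → ∀ ν : {i : ℕ // 2 ≤ i} →₀ ℕ,
        @algebraMap (RatFunc ℂ) (LaurentSeries ℂ) _ _ (RatFunc.liftAlgebra ℂ (LaurentSeries ℂ)) (MvPolynomial.coeff ν (G n)) =
          HahnSeries.ofPowerSeries ℤ ℂ (PowerSeries.mk fun a =>
            MvPowerSeries.coeff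
              (Finsupp.embDomain (Function.Embedding.subtype fun i => 2 ≤ i) ν
                + Finsupp.single 1 a)
              (setT0 (corr (Multiset.replicate n 0))))) ∧
      Function.Bijective
        ⇑(MvPolynomial.aeval (fun p : {n : ℕ // 4 ≤ n} => G p.1) :
          MvPolynomial {n : ℕ // 4 ≤ n} (RatFunc ℂ) →ₐ[RatFunc ℂ]
            MvPolynomial {i : ℕ // 2 ≤ i} (RatFunc ℂ)) := by

  refine ⟨Gg, fun n hn ν => hahn_eq hn ν, ?_⟩
  have h1 : Ψm.comp Φm = AlgHom.id (RatFunc ℂ) PP :=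
    MvPolynomial.algHom_ext fun p => by
      simp only [AlgHom.comp_apply, AlgHom.id_apply]; exact Psi_Phi_X p
  have h2 : Φm.comp Ψm = AlgHom.id (RatFunc ℂ) AP :=
    MvPolynomial.algHom_ext fun j => by
      simp only [AlgHom.comp_apply, AlgHom.id_apply]; exact Phi_Psi_X j
  exact Function.bijective_iff_has_inverse.mpr
    ⟨Ψm, fun x => AlgHom.congr_fun h1 x, fun x => AlgHom.congr_fun h2 x⟩
end
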